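/- arXiv:2501.17118 — 5 statements merged into one kernel-verified Lean document; each statement's English description precedes it below -/
import Mathlib

section
/- Let f ∈ L¹(ℝ;ℂ) and let f̂(s) = ∫_{−∞}^{∞} e^{−i·s·t} f(t) dt be its Fourier transform. Then for every s ∈ ℝ, ∫_0^s ∫_0^{σ₂} f̂(σ₁) dσ₁ dσ₂ = ∫_{−∞}^{∞} v_s(t) f(t) dt. Consequently the function s ↦ ∫_{−∞}^{∞} v_s(t) f(t) dt is twice differentiable at every s ∈ ℝ and its second derivative at s equals f̂(s). -/
open MeasureTheory Filter Topology

noncomputable def v (s t : ℝ) : ℂ :=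
  if t = 0 then (s:ℂ)^2/2
  else (1 - Complex.I*(s:ℂ)*(t:ℂ) - Complex.exp (-Complex.I*(s:ℂ)*(t:ℂ)))/(t:ℂ)^2

/-- Fourier transform of an integrable function. -/
noncomputable def ft (f : ℝ → ℂ) (s : ℝ) : ℂ :=
  ∫ t : ℝ, Complex.exp (-Complex.I*(s:ℂ)*(t:ℂ)) * f t

open Metric Complex

noncomputable def w (s t : ℝ) : ℂ :=
  if t = 0 then (s:ℂ)
  else -Complex.I * (1 - Complex.exp (-Complex.I*(s:ℂ)*(t:ℂ)))/(t:ℂ)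

lemma norm_one_sub_exp (x : ℝ) : ‖1 - Complex.exp (-Complex.I*x)‖ ≤ 2 * |x| := by
  rcases le_or_gt |x| 1 with h | h
  · have := Complex.norm_exp_sub_one_le (x := -Complex.I*x) (by simpa using h)
    calc ‖1 - Complex.exp (-Complex.I*x)‖ = ‖Complex.exp (-Complex.I*x) - 1‖ := by
          rw [norm_sub_rev]
      _ ≤ 2 * ‖(-Complex.I*(x:ℂ))‖ := this
      _ = 2 * |x| := by simp
  · have h1 : ‖Complex.exp (-Complex.I*x)‖ = 1 := by
      rw [Complex.norm_exp]; simp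
    calc ‖1 - Complex.exp (-Complex.I*x)‖ ≤ ‖(1:ℂ)‖ + ‖Complex.exp (-Complex.I*x)‖ :=
          norm_sub_le _ _
      _ = 2 := by rw [h1]; norm_num
      _ ≤ 2 * |x| := by nlinarith

lemma norm_num_le (x : ℝ) : ‖1 - Complex.I*x - Complex.exp (-Complex.I*x)‖ ≤ 3 * x^2 := by
  rcases le_or_gt |x| 1 with h | h
  · have := Complex.norm_exp_sub_one_sub_id_le (x := -Complex.I*x) (by simpa using h)
    calc ‖1 - Complex.I*x - Complex.exp (-Complex.I*x)‖
        = ‖Complex.exp (-Complex.I*x) - 1 - (-Complex.I*x)‖ := by rw [← norm_neg]; congr 1; ring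
      _ ≤ ‖(-Complex.I*(x:ℂ))‖^2 := this
      _ = x^2 := by simp [_root_.sq_abs]
      _ ≤ 3 * x^2 := by nlinarith
  · have h1 : ‖Complex.exp (-Complex.I*x)‖ = 1 := by
      rw [Complex.norm_exp]; simp
    have h2 : ‖Complex.I*(x:ℝ)‖ = |x| := by simp
    calc ‖1 - Complex.I*x - Complex.exp (-Complex.I*x)‖
        ≤ ‖(1:ℂ) - Complex.I*x‖ + ‖Complex.exp (-Complex.I*x)‖ := norm_sub_le _ _
      _ ≤ ‖(1:ℂ)‖ + ‖Complex.I*(x:ℝ)‖ + 1 := by rw [h1]; gcongr; exact norm_sub_le _ _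
      _ = 2 + |x| := by rw [h2]; norm_num; ring
      _ ≤ 3 * x^2 := by nlinarith [_root_.sq_abs x, abs_nonneg x]

lemma norm_v_le (s t : ℝ) : ‖v s t‖ ≤ 3 * s^2 := by
  unfold v
  split_ifs with h
  · have h2 : ‖(s:ℂ)^2/2‖ = s^2/2 := by
      rw [norm_div, norm_pow]; simp [_root_.sq_abs]
    rw [h2]; nlinarith [sq_nonneg s]
  · rw [norm_div]
    have ht : (0:ℝ) < ‖((t:ℂ))^2‖ := by
      simp only [norm_pow, Complex.norm_real, Real.norm_eq_abs]
      positivity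
    rw [div_le_iff₀ ht]
    calc ‖1 - Complex.I*s*t - Complex.exp (-Complex.I*s*t)‖
        = ‖1 - Complex.I*(s*t:ℝ) - Complex.exp (-Complex.I*(s*t:ℝ))‖ := by push_cast; ring_nf
      _ ≤ 3 * (s*t)^2 := norm_num_le (s*t)
      _ = 3 * s^2 * ‖((t:ℂ))^2‖ := by
          simp only [norm_pow, Complex.norm_real, Real.norm_eq_abs, _root_.sq_abs]; ring

lemma norm_w_le (s t : ℝ) : ‖w s t‖ ≤ 2 * |s| := by
  unfold w
  split_ifs with h
  · simp only [Complex.norm_real, Real.norm_eq_abs]; nlinarith [abs_nonneg s]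
  · rw [norm_div, norm_mul]
    have ht : (0:ℝ) < ‖((t:ℂ))‖ := by simp; positivity
    rw [div_le_iff₀ ht]
    calc ‖-Complex.I‖ * ‖1 - Complex.exp (-Complex.I*s*t)‖
        = ‖1 - Complex.exp (-Complex.I*(s*t:ℝ))‖ := by push_cast; ring_nf; simp
      _ ≤ 2 * |s*t| := norm_one_sub_exp (s*t)
      _ = 2 * |s| * ‖((t:ℂ))‖ := by rw [abs_mul]; simp; ring

lemma hasDerivAt_coe (s : ℝ) : HasDerivAt (fun s' : ℝ => (s' : ℂ)) 1 s := by
  simpa using (hasDerivAt_id s).ofReal_comp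

lemma hasDerivAt_v (s t : ℝ) : HasDerivAt (fun s' => v s' t) (w s t) s := by
  unfold v w
  split_ifs with h
  · have h1 := ((hasDerivAt_coe s).mul (hasDerivAt_coe s)).div_const 2
    simp only [pow_two]
    refine h1.congr_deriv ?_
    push_cast
    ring
  · have ht : (t:ℂ) ≠ 0 := by exact_mod_cast h
    have h1 : HasDerivAt (fun s' : ℝ => -Complex.I*(s':ℂ)*(t:ℂ))
        (-Complex.I*(t:ℂ)) s := by
      have := ((hasDerivAt_coe s).const_mul (-Complex.I)).mul_const (t:ℂ)
      simpa using this
    have h2 : HasDerivAt (fun s' : ℝ =>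
        (1 - Complex.I*(s':ℂ)*(t:ℂ) - Complex.exp (-Complex.I*(s':ℂ)*(t:ℂ)))/(t:ℂ)^2)
        ((0 - (-(-Complex.I*(t:ℂ))) - Complex.exp (-Complex.I*(s:ℂ)*(t:ℂ)) * (-Complex.I*(t:ℂ)))/(t:ℂ)^2) s := by
      refine HasDerivAt.div_const ?_ _
      refine HasDerivAt.sub ?_ h1.cexp
      refine HasDerivAt.sub (hasDerivAt_const _ _) ?_
      have h1' := ((hasDerivAt_coe s).const_mul (Complex.I)).mul_const (t:ℂ)
      simpa using h1'
    convert h2 using 1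
    field_simp
    ring

lemma hasDerivAt_w (s t : ℝ) : HasDerivAt (fun s' => w s' t)
    (Complex.exp (-Complex.I*(s:ℂ)*(t:ℂ))) s := by
  unfold w
  split_ifs with h
  · subst h
    convert hasDerivAt_coe s using 1
    simp
  · have ht : (t:ℂ) ≠ 0 := by exact_mod_cast h
    have h1 : HasDerivAt (fun s' : ℝ => -Complex.I*(s':ℂ)*(t:ℂ)) (-Complex.I*(t:ℂ)) s := by
      have := ((hasDerivAt_coe s).const_mul (-Complex.I)).mul_const (t:ℂ)
      simpa using this
    have h3 := (((hasDerivAt_const s (1:ℂ)).sub h1.cexp).const_mul (-Complex.I)).div_const (t:ℂ)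
    refine (h3.congr_deriv ?_)
    have : Complex.I * Complex.I = -1 := Complex.I_mul_I
    field_simp
    ring_nf
    rw [Complex.I_sq]
    ring

lemma measurable_coe' : Measurable fun t:ℝ => (t:ℂ) := Complex.measurable_ofReal

lemma measurable_exp' (s : ℝ) : Measurable fun t:ℝ => Complex.exp (-Complex.I*(s:ℂ)*(t:ℂ)) :=
  Complex.measurable_exp.comp (measurable_coe'.const_mul _)

lemma measurable_v (s : ℝ) : Measurable (v s) := by
  unfold v
  exact Measurable.ite measurableSet_eq measurable_const
    (((measurable_const.sub (measurable_coe'.const_mul _)).sub (measurable_exp' s)).div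
      (measurable_coe'.pow_const 2))

lemma measurable_w (s : ℝ) : Measurable (w s) := by
  unfold w
  exact Measurable.ite measurableSet_eq measurable_const
    (((measurable_const.sub (measurable_exp' s)).const_mul _).div measurable_coe')

lemma key1 (f : ℝ → ℂ) (hf : Integrable f) (s : ℝ) :
    Integrable (fun t : ℝ => w s t * f t) ∧
    HasDerivAt (fun s' : ℝ => ∫ t : ℝ, v s' t * f t) (∫ t : ℝ, w s t * f t) s := by
  refine hasDerivAt_integral_of_dominated_loc_of_deriv_le
    (F := fun s' t => v s' t * f t) (F' := fun s' t => w s' t * f t) (Metric.ball_mem_nhds s one_pos)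
    (Eventually.of_forall fun s' => ((measurable_v s').aestronglyMeasurable.mul hf.1))
    ?_ ((measurable_w s).aestronglyMeasurable.mul hf.1)
    (bound := fun t => 2*(|s|+1) * ‖f t‖) ?_ ((hf.norm.const_mul _)) ?_
  · refine ((hf.norm.const_mul (3*s^2)).mono'
      ((measurable_v s).aestronglyMeasurable.mul hf.1) ?_)
    refine Eventually.of_forall fun t => ?_
    rw [norm_mul]
    exact mul_le_mul_of_nonneg_right (norm_v_le s t) (norm_nonneg _)
  · refine Eventually.of_forall fun t => fun s' hs' => ?_
    rw [norm_mul]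
    refine mul_le_mul_of_nonneg_right ((norm_w_le s' t).trans ?_) (norm_nonneg _)
    have : |s'| ≤ |s| + 1 := by
      have := mem_ball_iff_norm.mp hs'
      rw [Real.norm_eq_abs] at this
      calc |s'| = |s + (s' - s)| := by ring_nf
        _ ≤ |s| + |s' - s| := abs_add_le _ _
        _ ≤ |s| + 1 := by linarith [abs_sub_comm s' s ▸ this.le]
    linarith
  · exact Eventually.of_forall fun t => fun s' _ => (hasDerivAt_v s' t).mul_const (f t)

lemma key2 (f : ℝ → ℂ) (hf : Integrable f) (s : ℝ) :
    HasDerivAt (fun s' : ℝ => ∫ t : ℝ, w s' t * f t)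
      (∫ t : ℝ, Complex.exp (-Complex.I*(s:ℂ)*(t:ℂ)) * f t) s := by
  refine (hasDerivAt_integral_of_dominated_loc_of_deriv_le
    (F := fun s' t => w s' t * f t)
    (F' := fun s' t => Complex.exp (-Complex.I*(s':ℂ)*(t:ℂ)) * f t) (Metric.ball_mem_nhds s one_pos)
    (Eventually.of_forall fun s' => ((measurable_w s').aestronglyMeasurable.mul hf.1))
    (key1 f hf s).1
    (((measurable_exp' s).aestronglyMeasurable.mul hf.1))
    (bound := fun t => ‖f t‖) ?_ hf.norm ?_).2
  · refine Eventually.of_forall fun t => fun s' _ => ?_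
    rw [norm_mul]
    have h1 : ‖Complex.exp (-Complex.I*(s':ℂ)*(t:ℂ))‖ = 1 := by
      rw [Complex.norm_exp]; simp
    rw [h1, one_mul]
  · exact Eventually.of_forall fun t => fun s' _ => (hasDerivAt_w s' t).mul_const (f t)

lemma w_zero (t : ℝ) : w 0 t = 0 := by
  unfold w; split_ifs <;> simp

lemma v_zero (t : ℝ) : v 0 t = 0 := by
  unfold v; split_ifs <;> simp

lemma ft_cont (f : ℝ → ℂ) (hf : Integrable f) : Continuous (ft f) := by
  unfold ft
  refine continuous_of_dominated (bound := fun t => ‖f t‖)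
    (fun s => (measurable_exp' s).aestronglyMeasurable.mul hf.1) ?_ hf.norm ?_
  · intro s
    refine Eventually.of_forall fun t => ?_
    rw [norm_mul]
    have h1 : ‖Complex.exp (-Complex.I*(s:ℂ)*(t:ℂ))‖ = 1 := by
      rw [Complex.norm_exp]; simp
    rw [h1, one_mul]
  · refine Eventually.of_forall fun t => ?_
    have : Continuous fun s : ℝ => -Complex.I*(s:ℂ)*(t:ℂ) := by
      exact (continuous_const.mul Complex.continuous_ofReal).mul continuous_const
    exact (Complex.continuous_exp.comp this).mul continuous_const

theorem stmt0 (f : ℝ → ℂ) (hf : Integrable f) :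
    (∀ s : ℝ, (∫ σ₂ in (0:ℝ)..s, ∫ σ₁ in (0:ℝ)..σ₂, ft f σ₁)
        = ∫ t : ℝ, v s t * f t) ∧
    ∃ Ω' : ℝ → ℂ,
      (∀ s : ℝ, HasDerivAt (fun s' : ℝ => ∫ t : ℝ, v s' t * f t) (Ω' s) s) ∧
      (∀ s : ℝ, HasDerivAt Ω' (ft f s) s) := by
  set W : ℝ → ℂ := fun s => ∫ t : ℝ, w s t * f t with hWdef
  have hW : ∀ s, HasDerivAt (fun s' : ℝ => ∫ t : ℝ, v s' t * f t) (W s) s :=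
    fun s => (key1 f hf s).2
  have hW' : ∀ s, HasDerivAt W (ft f s) s := fun s => key2 f hf s
  have hcont : Continuous (ft f) := ft_cont f hf
  have hFh : ∀ s, HasDerivAt (fun u => ∫ σ in (0:ℝ)..u, ft f σ) (ft f s) s :=
    fun s => (hcont.integral_hasStrictDerivAt 0 s).hasDerivAt
  have hW0 : W 0 = 0 := by
    have h0 : (fun t : ℝ => w 0 t * f t) = fun _ => 0 := funext fun t => by rw [w_zero, zero_mul]
    show (∫ t : ℝ, w 0 t * f t) = 0
    rw [h0, integral_zero]
  have hWF : ∀ s, W s = ∫ σ in (0:ℝ)..s, ft f σ := by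
    intro s
    have hconst := is_const_of_deriv_eq_zero
      (f := fun u => W u - ∫ σ in (0:ℝ)..u, ft f σ)
      (fun x => ((hW' x).sub (hFh x)).differentiableAt)
      (fun x => (((hW' x).sub (hFh x)).deriv).trans (sub_self _)) s 0
    rw [intervalIntegral.integral_same, hW0, sub_zero] at hconst
    linear_combination hconst
  have hWc : Continuous W := by
    rw [continuous_iff_continuousAt]; exact fun x => (hW' x).continuousAt
  refine ⟨fun s => ?_, W, hW, hW'⟩
  have hG : ∀ x, HasDerivAt (fun u => ∫ σ₂ in (0:ℝ)..u, ∫ σ₁ in (0:ℝ)..σ₂, ft f σ₁)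
      (∫ σ₁ in (0:ℝ)..x, ft f σ₁) x := by
    have hc2 : Continuous fun σ₂ => ∫ σ₁ in (0:ℝ)..σ₂, ft f σ₁ := by
      rw [continuous_iff_continuousAt]; exact fun x => (hFh x).continuousAt
    exact fun x => (hc2.integral_hasStrictDerivAt 0 x).hasDerivAt
  have hO0 : (∫ t : ℝ, v 0 t * f t) = 0 := by
    have : (fun t : ℝ => v 0 t * f t) = fun _ => 0 := funext fun t => by rw [v_zero, zero_mul]
    rw [this, integral_zero]
  have hconst := is_const_of_deriv_eq_zero
    (f := fun u => (∫ t : ℝ, v u t * f t) - ∫ σ₂ in (0:ℝ)..u, ∫ σ₁ in (0:ℝ)..σ₂, ft f σ₁)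
    (fun x => ((hW x).sub (hG x)).differentiableAt)
    (fun x => (((hW x).sub (hG x)).deriv).trans (by rw [hWF x, sub_self])) s 0
  rw [intervalIntegral.integral_same, hO0, sub_zero] at hconst
  linear_combination -hconst
end

section
/- Let F ∈ ℬ_c(ℝ) and let c = ∫_{−∞}^{∞} |v₁′(t)| dt. Then |Ω_F(s)| ≤ c·‖F‖_∞·s² for all s ∈ ℝ; in particular Ω_F(0) = 0 and Ω_F is differentiable at 0 with Ω_F′(0) = 0. -/
open MeasureTheory Filter Topology

noncomputable def vd (s t : ℝ) : ℂ :=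
  if t = 0 then 0
  else (Complex.I*(s:ℂ)*Complex.exp (-Complex.I*(s:ℂ)*(t:ℂ)) - Complex.I*(s:ℂ))/(t:ℂ)^2
    - 2*(1 - Complex.I*(s:ℂ)*(t:ℂ) - Complex.exp (-Complex.I*(s:ℂ)*(t:ℂ)))/(t:ℂ)^3

def BcR (F : ℝ → ℂ) : Prop :=
  Continuous F ∧ Tendsto F atBot (𝓝 0) ∧ ∃ L : ℂ, Tendsto F atTop (𝓝 L)

noncomputable def Om (F : ℝ → ℂ) (s : ℝ) : ℂ := -∫ t : ℝ, F t * vd s t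

lemma vd_zero_fun (t : ℝ) : vd 0 t = 0 := by
  unfold vd; split <;> simp

lemma vd_scale (s t : ℝ) : vd s t = (s:ℂ)^3 * vd 1 (s*t) := by
  rcases eq_or_ne s 0 with hs | hs
  · subst hs; simp [vd_zero_fun, vd]
  rcases eq_or_ne t 0 with ht | ht
  · subst ht; simp [vd]
  have hst : s * t ≠ 0 := mul_ne_zero hs ht
  unfold vd
  rw [if_neg ht, if_neg hst]
  have h1 : -Complex.I*((1:ℝ):ℂ)*((s*t : ℝ):ℂ) = -Complex.I*(s:ℂ)*(t:ℂ) := by push_cast; ring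
  rw [h1]
  have hsc : (s:ℂ) ≠ 0 := by exact_mod_cast hs
  have htc : (t:ℂ) ≠ 0 := by exact_mod_cast ht
  push_cast
  field_simp

lemma vd_meas (s : ℝ) : Measurable (vd s) := by
  unfold vd
  refine Measurable.ite (measurableSet_eq) measurable_const ?_
  fun_prop

lemma vd_one_eq (t : ℝ) (ht : t ≠ 0) :
    vd 1 t = (Complex.I*(t:ℂ)*Complex.exp (-Complex.I*(t:ℂ)) + 2*Complex.exp (-Complex.I*(t:ℂ))
      + Complex.I*(t:ℂ) - 2)/(t:ℂ)^3 := by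
  have htc : (t:ℂ) ≠ 0 := by exact_mod_cast ht
  unfold vd
  rw [if_neg ht]
  have h1 : -Complex.I*((1:ℝ):ℂ)*((t : ℝ):ℂ) = -Complex.I*(t:ℂ) := by push_cast; ring
  rw [h1]
  push_cast
  field_simp
  ring

lemma vd_one_bound (t : ℝ) : ‖vd 1 t‖ ≤ 16 * (1 + t^2)⁻¹ := by
  rcases eq_or_ne t 0 with ht | ht
  · subst ht; simp [vd]
  have htc : (t:ℂ) ≠ 0 := by exact_mod_cast ht
  have ht3 : (0:ℝ) < |t|^3 := by positivity
  have h12 : (0:ℝ) < 1 + t^2 := by positivity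
  set w : ℂ := Complex.exp (-Complex.I*(t:ℂ)) with hw_def
  have hw : ‖w‖ = 1 := by
    rw [hw_def, Complex.norm_exp]; simp
  have habs : ‖(t:ℂ)‖ = |t| := by rw [Complex.norm_real, Real.norm_eq_abs]
  have hnorm3 : ‖(t:ℂ)^3‖ = |t|^3 := by rw [norm_pow, habs]
  rw [vd_one_eq t ht, norm_div, hnorm3]
  rcases le_total 1 |t| with h1t | h1t
  · have hnum : ‖Complex.I*(t:ℂ)*w + 2*w + Complex.I*(t:ℂ) - 2‖ ≤ 2*|t| + 4 := by
      calc ‖Complex.I*(t:ℂ)*w + 2*w + Complex.I*(t:ℂ) - 2‖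
          ≤ ‖Complex.I*(t:ℂ)*w + 2*w + Complex.I*(t:ℂ)‖ + ‖(2:ℂ)‖ := norm_sub_le _ _
        _ ≤ ‖Complex.I*(t:ℂ)*w + 2*w‖ + ‖Complex.I*(t:ℂ)‖ + ‖(2:ℂ)‖ := by
            gcongr; exact norm_add_le _ _
        _ ≤ ‖Complex.I*(t:ℂ)*w‖ + ‖2*w‖ + ‖Complex.I*(t:ℂ)‖ + ‖(2:ℂ)‖ := by
            gcongr; exact norm_add_le _ _
        _ = 2*|t| + 4 := by
            simp [norm_mul, hw, habs, Complex.norm_I]; ring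
    calc ‖Complex.I*(t:ℂ)*w + 2*w + Complex.I*(t:ℂ) - 2‖ / |t|^3
        ≤ (2*|t| + 4) / |t|^3 := by gcongr
      _ ≤ 16 * (1 + t^2)⁻¹ := by
          have e : 16 * (1 + t^2)⁻¹ * |t|^3 = 16 * |t|^3 / (1 + t^2) := by ring
          rw [div_le_iff₀ ht3, e, le_div_iff₀ h12]
          have h2 : |t|^2 ≤ |t|^3 := by nlinarith [abs_nonneg t]
          have h3 : |t| ≤ |t|^3 := by nlinarith [abs_nonneg t]
          have h4 : 1 ≤ |t|^3 := by nlinarith [abs_nonneg t]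
          nlinarith [sq_abs t]
  · have habs' : ‖(-Complex.I*(t:ℂ))‖ = |t| := by
      simp [Complex.norm_real]
    have hE : ‖w - (1 + (-Complex.I*(t:ℂ)) + (-Complex.I*(t:ℂ))^2/2)‖ ≤ |t|^3 := by
      have h := Complex.exp_bound (x := -Complex.I*(t:ℂ)) (by rw [habs']; exact h1t)
        (n := 3) (by norm_num)
      have hsum : ∑ m ∈ Finset.range 3, (-Complex.I*(t:ℂ)) ^ m / m.factorial
          = 1 + (-Complex.I*(t:ℂ)) + (-Complex.I*(t:ℂ))^2/2 := by
        simp [Finset.sum_range_succ, Nat.factorial]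
      rw [hsum] at h
      rw [hw_def]
      refine h.trans ?_
      rw [habs']
      have hc : ((3:ℕ).succ : ℝ) * (((3:ℕ).factorial * 3 : ℝ))⁻¹ ≤ 1 := by norm_num [Nat.factorial]
      simpa using mul_le_of_le_one_right (pow_nonneg (abs_nonneg t) 3) hc
    have hN : Complex.I*(t:ℂ)*w + 2*w + Complex.I*(t:ℂ) - 2
        = -Complex.I*(t:ℂ)^3/2
          + (Complex.I*(t:ℂ) + 2) * (w - (1 + (-Complex.I*(t:ℂ)) + (-Complex.I*(t:ℂ))^2/2)) := by
      linear_combination (Complex.I * (t:ℂ)^3/2) * Complex.I_sq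
    have hnum : ‖Complex.I*(t:ℂ)*w + 2*w + Complex.I*(t:ℂ) - 2‖ ≤ 4 * |t|^3 := by
      rw [hN]
      calc ‖-Complex.I*(t:ℂ)^3/2
            + (Complex.I*(t:ℂ) + 2) * (w - (1 + (-Complex.I*(t:ℂ)) + (-Complex.I*(t:ℂ))^2/2))‖
          ≤ ‖-Complex.I*(t:ℂ)^3/2‖
            + ‖(Complex.I*(t:ℂ) + 2)‖ * ‖(w - (1 + (-Complex.I*(t:ℂ)) + (-Complex.I*(t:ℂ))^2/2))‖ := by
            refine (norm_add_le _ _).trans ?_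
            rw [norm_mul]
        _ ≤ |t|^3/2 + (|t| + 2) * |t|^3 := by
            gcongr
            · rw [norm_div]
              simp [norm_mul, habs, Complex.norm_I, norm_pow]
            · exact (norm_add_le _ _).trans (by simp [norm_mul, habs, Complex.norm_I])
        _ ≤ 4 * |t|^3 := by nlinarith [abs_nonneg t, pow_nonneg (abs_nonneg t) 3]
    calc ‖Complex.I*(t:ℂ)*w + 2*w + Complex.I*(t:ℂ) - 2‖ / |t|^3
        ≤ 4 * |t|^3 / |t|^3 := by gcongr
      _ = 4 := by field_simp
      _ ≤ 16 * (1 + t^2)⁻¹ := by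
          rw [le_mul_inv_iff₀ h12]
          nlinarith [sq_abs t, abs_nonneg t]

lemma vd_one_integrable : Integrable (vd 1) := by
  refine Integrable.mono' ((integrable_inv_one_add_sq).const_mul 16)
    (vd_meas 1).aestronglyMeasurable ?_
  filter_upwards with t
  exact vd_one_bound t

lemma bcr_bdd (F : ℝ → ℂ) (hF : BcR F) : BddAbove (Set.range fun x => ‖F x‖) := by
  obtain ⟨hc, hbot, L, htop⟩ := hF
  have h1 : ∀ᶠ x in atTop, ‖F x‖ < ‖L‖ + 1 :=
    (htop.norm).eventually_lt_const (by linarith [norm_nonneg L])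
  obtain ⟨A, hA⟩ := eventually_atTop.1 h1
  have h2 : ∀ᶠ x in atBot, ‖F x‖ < 1 := by
    have := hbot.norm
    rw [norm_zero] at this
    exact this.eventually_lt_const one_pos
  obtain ⟨B, hB⟩ := eventually_atBot.1 h2
  obtain ⟨C, hC⟩ := (isCompact_Icc (a := B) (b := A)).exists_bound_of_continuousOn
    hc.continuousOn
  refine ⟨max (max (‖L‖+1) 1) C, ?_⟩
  rintro y ⟨x, rfl⟩
  rcases le_total x B with h | h
  · exact le_trans (hB x h).le (le_trans (le_max_right _ _) (le_max_left _ _))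
  rcases le_total A x with h' | h'
  · exact le_trans (hA x h').le (le_trans (le_max_left _ _) (le_max_left _ _))
  · exact le_trans (hC x ⟨h, h'⟩) (le_max_right _ _)

theorem stmt1 (F : ℝ → ℂ) (hF : BcR F) :
    (∀ s : ℝ, ‖Om F s‖ ≤ (∫ t : ℝ, ‖vd 1 t‖) * (⨆ x : ℝ, ‖F x‖) * s^2) ∧
    Om F 0 = 0 ∧ HasDerivAt (Om F) 0 0 := by
  have hcont := hF.1
  have hbdd := bcr_bdd F hF
  set M := ⨆ x : ℝ, ‖F x‖ with hM_def
  have hB : ∀ x, ‖F x‖ ≤ M := fun x => le_ciSup hbdd x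
  have hM0 : 0 ≤ M := le_trans (norm_nonneg (F 0)) (hB 0)
  set c := ∫ t : ℝ, ‖vd 1 t‖ with hc_def
  set K : ENNReal := ∫⁻ t : ℝ, ‖vd 1 t‖₊ with hK_def
  have hKfin : K ≠ ⊤ := (vd_one_integrable.2).ne
  have hc_eq : c = K.toReal := by
    rw [hc_def, hK_def, integral_eq_lintegral_of_nonneg_ae
      (Filter.Eventually.of_forall fun t => norm_nonneg _)
      (vd_meas 1).aestronglyMeasurable.norm]
    congr 1
    refine lintegral_congr fun t => ?_
    rw [ofReal_norm, enorm_eq_nnnorm]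
  have h0 : Om F 0 = 0 := by
    simp [Om, vd_zero_fun]
  have key : ∀ s : ℝ, ‖Om F s‖ ≤ c * M * s^2 := by
    intro s
    rcases eq_or_ne s 0 with rfl | hs
    · rw [h0]
      simp
    have step1 : ‖Om F s‖ ≤ (∫⁻ t : ℝ, ENNReal.ofReal ‖F t * vd s t‖).toReal := by
      rw [Om, norm_neg]
      exact norm_integral_le_lintegral_norm _
    have hpt : ∀ t : ℝ, ENNReal.ofReal ‖F t * vd s t‖
        ≤ ENNReal.ofReal M * (ENNReal.ofReal (|s|^3) * (‖vd 1 (s*t)‖₊ : ENNReal)) := by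
      intro t
      have h1 : ENNReal.ofReal ‖F t * vd s t‖ = (‖F t‖₊ : ENNReal) * (‖vd s t‖₊ : ENNReal) := by
        rw [ofReal_norm, enorm_eq_nnnorm, nnnorm_mul, ENNReal.coe_mul]
      have h2 : (‖vd s t‖₊ : ENNReal) = ENNReal.ofReal (|s|^3) * (‖vd 1 (s*t)‖₊ : ENNReal) := by
        rw [vd_scale s t, nnnorm_mul, ENNReal.coe_mul]
        congr 1
        rw [← enorm_eq_nnnorm, ← ofReal_norm]
        congr 1
        rw [norm_pow, Complex.norm_real, Real.norm_eq_abs]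
      rw [h1, h2, ← mul_assoc, ← mul_assoc]
      gcongr
      rw [← enorm_eq_nnnorm, ← ofReal_norm]
      exact ENNReal.ofReal_le_ofReal (hB t)
    have hcomp : ∫⁻ t : ℝ, (‖vd 1 (s*t)‖₊ : ENNReal) = ENNReal.ofReal |s⁻¹| * K := by
      have hmg : Measurable fun u : ℝ => (‖vd 1 u‖₊ : ENNReal) := (vd_meas 1).nnnorm.coe_nnreal_ennreal
      have := lintegral_map (μ := volume) hmg (measurable_const_mul s)
      rw [Real.map_volume_mul_left hs] at this
      rw [hK_def, ← this, lintegral_smul_measure, smul_eq_mul]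
    have step2 : (∫⁻ t : ℝ, ENNReal.ofReal ‖F t * vd s t‖)
        ≤ ENNReal.ofReal (M * s^2) * K := by
      calc ∫⁻ t : ℝ, ENNReal.ofReal ‖F t * vd s t‖
          ≤ ∫⁻ t : ℝ, ENNReal.ofReal M * (ENNReal.ofReal (|s|^3) * (‖vd 1 (s*t)‖₊ : ENNReal)) :=
            lintegral_mono hpt
        _ = ENNReal.ofReal M * (ENNReal.ofReal (|s|^3) * ∫⁻ t : ℝ, (‖vd 1 (s*t)‖₊ : ENNReal)) := by
            rw [lintegral_const_mul' _ _ ENNReal.ofReal_ne_top,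
              lintegral_const_mul' _ _ ENNReal.ofReal_ne_top]
        _ = ENNReal.ofReal (M * s^2) * K := by
            rw [hcomp, ← mul_assoc, ← mul_assoc,
              ← ENNReal.ofReal_mul hM0,
              ← ENNReal.ofReal_mul (mul_nonneg hM0 (by positivity))]
            congr 2
            rw [abs_inv, mul_assoc]
            congr 1
            rw [eq_comm, ← sq_abs]
            field_simp
    calc ‖Om F s‖ ≤ (∫⁻ t : ℝ, ENNReal.ofReal ‖F t * vd s t‖).toReal := step1
      _ ≤ (ENNReal.ofReal (M * s^2) * K).toReal := by
          refine ENNReal.toReal_mono ?_ step2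
          exact ENNReal.mul_ne_top ENNReal.ofReal_ne_top hKfin
      _ = c * M * s^2 := by
          rw [ENNReal.toReal_mul, ENNReal.toReal_ofReal (by positivity), ← hc_eq]
          ring
  refine ⟨key, h0, ?_⟩
  rw [hasDerivAt_iff_isLittleO]
  simp only [h0, sub_zero, smul_zero, sub_zero]
  have hbig : (fun s => Om F s) =O[𝓝 0] (fun s : ℝ => s^2) := by
    refine Asymptotics.IsBigO.of_bound (c * M) ?_
    filter_upwards with s
    rw [Real.norm_eq_abs, abs_of_nonneg (sq_nonneg s)]
    exact key s
  have hlil : (fun s : ℝ => s^2) =o[𝓝 0] (fun s : ℝ => s) := by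
    rw [Asymptotics.isLittleO_iff]
    intro ε hε
    filter_upwards [Metric.ball_mem_nhds (0:ℝ) hε] with s hs
    rw [mem_ball_zero_iff] at hs
    rw [sq, norm_mul]
    exact mul_le_mul_of_nonneg_right hs.le (norm_nonneg s)
  exact hbig.trans_isLittleO hlil
end

section
/- Let F ∈ ℬ_c(ℝ). Let ψ ∈ L¹(ℝ;ℂ) with ∫_{−∞}^{∞} ψ(t) dt = 1, and suppose the Fourier transform ψ̂(s) = ∫ e^{−i·s·t} ψ(t) dt is differentiable on ℝ with ψ̂(s) = ψ̂(0) + ∫_0^s ψ̂′(u) du for all s, and that s ↦ s²·ψ̂(s) and s ↦ s²·ψ̂′(s) are in L¹(ℝ) and s ↦ s²·ψ̂′(s) is of bounded variation on ℝ. For a > 0 let ψ_a(x) = ψ(x/a)/a. Then sup_{x∈ℝ} |F(x) − ∫_{−∞}^{∞} F(x − t)·ψ_a(t) dt| → 0 as a → 0⁺. (Since F*ψ_a is the primitive of f*ψ_a = I_a[f] where f = F′, this says ‖f − I_a[f]‖ → 0 in the Alexiewicz norm.) -/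
open MeasureTheory Filter Topology


lemma aux_tail (ψ : ℝ → ℂ) (hψi : Integrable ψ) :
    Tendsto (fun b : ℝ => ∫ s in (Metric.closedBall (0:ℝ) b)ᶜ, ‖ψ s‖) atTop (𝓝 0) := by
  have hU : ⋃ b : ℝ, Metric.closedBall (0:ℝ) b = Set.univ := by
    ext x
    simp only [Set.mem_iUnion, Metric.mem_closedBall, Set.mem_univ, iff_true]
    exact ⟨dist x 0, le_rfl⟩
  have hball : Tendsto (fun b : ℝ => ∫ s in Metric.closedBall (0:ℝ) b, ‖ψ s‖) atTop
      (𝓝 (∫ s, ‖ψ s‖)) := by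
    have := tendsto_setIntegral_of_monotone (f := fun s => ‖ψ s‖) (μ := volume)
      (s := fun b : ℝ => Metric.closedBall (0:ℝ) b)
      (fun b => measurableSet_closedBall)
      (fun b₁ b₂ h => Metric.closedBall_subset_closedBall h)
      (by rw [hU]; exact hψi.norm.integrableOn)
    rwa [hU, setIntegral_univ] at this
  have heq : ∀ b : ℝ, (∫ s in (Metric.closedBall (0:ℝ) b)ᶜ, ‖ψ s‖)
      = (∫ s, ‖ψ s‖) - ∫ s in Metric.closedBall (0:ℝ) b, ‖ψ s‖ := by
    intro b
    have := integral_add_compl (measurableSet_closedBall (x := (0:ℝ)) (ε := b)) hψi.norm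
    linarith
  have : Tendsto (fun b : ℝ => (∫ s, ‖ψ s‖) - ∫ s in Metric.closedBall (0:ℝ) b, ‖ψ s‖)
      atTop (𝓝 0) := by
    have h0 := tendsto_const_nhds (x := (∫ s : ℝ, ‖ψ s‖)) (f := atTop (α := ℝ))
    simpa using h0.sub hball
  exact this.congr fun b => (heq b).symm


lemma aux_norm (ψ : ℝ → ℂ) (a : ℝ) (ha : 0 < a) :
    (∫ t : ℝ, ‖ψ (t/a) / (a:ℂ)‖) = ∫ s : ℝ, ‖ψ s‖ := by
  have h1 : ∀ t : ℝ, ‖ψ (t/a) / (a:ℂ)‖ = ‖ψ (t/a)‖ / a := by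
    intro t
    rw [norm_div, Complex.norm_real, Real.norm_eq_abs, abs_of_pos ha]
  simp_rw [h1]
  rw [integral_div, MeasureTheory.Measure.integral_comp_div (fun s => ‖ψ s‖) a,
    abs_of_pos ha, smul_eq_mul]
  field_simp

lemma aux_one (ψ : ℝ → ℂ) (hψ1 : (∫ t : ℝ, ψ t) = 1) (a : ℝ) (ha : 0 < a) :
    (∫ t : ℝ, ψ (t/a) / (a:ℂ)) = 1 := by
  rw [integral_div, MeasureTheory.Measure.integral_comp_div ψ a, abs_of_pos ha, hψ1]
  rw [Complex.real_smul, mul_one, div_self (Complex.ofReal_ne_zero.2 ha.ne')]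

lemma aux_cov (ψ : ℝ → ℂ) (a δ : ℝ) (ha : 0 < a) :
    (∫ t in (Metric.closedBall (0:ℝ) δ)ᶜ, ‖ψ (t/a) / (a:ℂ)‖)
      = ∫ s in (Metric.closedBall (0:ℝ) (δ/a))ᶜ, ‖ψ s‖ := by
  set S := (Metric.closedBall (0:ℝ) δ)ᶜ with hS
  set T := (Metric.closedBall (0:ℝ) (δ/a))ᶜ with hT
  have hmem : ∀ t : ℝ, t ∈ S ↔ t/a ∈ T := by
    intro t
    simp only [hS, hT, Set.mem_compl_iff, Metric.mem_closedBall, Real.dist_eq, sub_zero,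
      not_le, abs_div, abs_of_pos ha]
    exact (div_lt_div_iff_of_pos_right ha).symm
  have h1 : ∀ t : ℝ, S.indicator (fun t => ‖ψ (t/a) / (a:ℂ)‖) t
      = (T.indicator (fun s => ‖ψ s‖)) (t/a) / a := by
    intro t
    by_cases h : t ∈ S
    · rw [Set.indicator_of_mem h, Set.indicator_of_mem ((hmem t).1 h), norm_div,
        Complex.norm_real, Real.norm_eq_abs, abs_of_pos ha]
    · rw [Set.indicator_of_notMem h, Set.indicator_of_notMem (fun hc => h ((hmem t).2 hc)),
        zero_div]
  have hSm : MeasurableSet S := measurableSet_closedBall.compl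
  have hTm : MeasurableSet T := measurableSet_closedBall.compl
  rw [← integral_indicator hSm, ← integral_indicator hTm]
  simp_rw [h1]
  rw [integral_div, MeasureTheory.Measure.integral_comp_div
    (fun s => T.indicator (fun s => ‖ψ s‖) s) a, abs_of_pos ha, smul_eq_mul]
  field_simp


lemma aux_bdd (F : ℝ → ℂ) (hF : BcR F) : ∃ C : ℝ, 0 < C ∧ ∀ x, ‖F x‖ ≤ C := by
  obtain ⟨hFc, hFbot, L, hFtop⟩ := hF
  have htop : ∀ᶠ x in atTop, ‖F x‖ < ‖L‖ + 1 :=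
    hFtop.norm.eventually_lt_const (by linarith [norm_nonneg L])
  have hbot : ∀ᶠ x in atBot, ‖F x‖ < ‖L‖ + 1 := by
    have h0 : Tendsto (fun x => ‖F x‖) atBot (𝓝 0) := by simpa using hFbot.norm
    exact h0.eventually_lt_const (show (0:ℝ) < ‖L‖ + 1 by positivity)
  obtain ⟨B, hB⟩ := eventually_atTop.1 htop
  obtain ⟨A, hA⟩ := eventually_atBot.1 hbot
  obtain ⟨C₀, hC₀⟩ := (isCompact_Icc (a := A) (b := B)).exists_bound_of_continuousOn
    hFc.continuousOn
  refine ⟨max C₀ (‖L‖ + 1), lt_of_lt_of_le (by positivity) (le_max_right _ _), fun x => ?_⟩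
  by_cases hxA : x ≤ A
  · exact le_trans (hA x hxA).le (le_max_right _ _)
  by_cases hxB : B ≤ x
  · exact le_trans (hB x hxB).le (le_max_right _ _)
  · exact le_trans (hC₀ x ⟨le_of_not_ge hxA, le_of_not_ge hxB⟩) (le_max_left _ _)

lemma aux_uc (F : ℝ → ℂ) (hF : BcR F) : UniformContinuous F := by
  obtain ⟨hFc, hFbot, L, hFtop⟩ := hF
  set c : ℂ := L / (Real.pi : ℂ) with hc
  set φ : ℝ → ℂ := fun x => (Real.arctan x + Real.pi / 2) • c with hφ
  have harctan_lip : LipschitzWith 1 Real.arctan := by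
    apply lipschitzWith_of_nnnorm_deriv_le Real.differentiable_arctan
    intro x
    rw [Real.deriv_arctan]
    refine NNReal.coe_le_coe.1 ?_
    rw [coe_nnnorm, NNReal.coe_one, Real.norm_eq_abs, abs_of_nonneg (by positivity)]
    rw [div_le_one (by positivity)]
    nlinarith [sq_nonneg x]
  have hφuc : UniformContinuous φ := by
    have h1 : UniformContinuous fun x : ℝ => Real.arctan x + Real.pi / 2 :=
      harctan_lip.uniformContinuous.add uniformContinuous_const
    have h2 : UniformContinuous fun r : ℝ => r • c :=
      ((ContinuousLinearMap.id ℝ ℝ).smulRight c).uniformContinuous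
    exact h2.comp h1
  have hφc : Continuous φ := hφuc.continuous
  have hφbot : Tendsto φ atBot (𝓝 0) := by
    have h1 : Tendsto (fun x : ℝ => Real.arctan x + Real.pi / 2) atBot (𝓝 0) := by
      have := (tendsto_nhds_of_tendsto_nhdsWithin Real.tendsto_arctan_atBot).add
        (tendsto_const_nhds (x := Real.pi / 2) (f := atBot (α := ℝ)))
      simpa using this
    have h2 := h1.smul_const c
    rwa [zero_smul] at h2
  have hφtop : Tendsto φ atTop (𝓝 L) := by
    have h1 : Tendsto (fun x : ℝ => Real.arctan x + Real.pi / 2) atTop (𝓝 Real.pi) := by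
      have := (tendsto_nhds_of_tendsto_nhdsWithin Real.tendsto_arctan_atTop).add
        (tendsto_const_nhds (x := Real.pi / 2) (f := atTop (α := ℝ)))
      simpa [add_halves] using this
    have h2 := h1.smul_const c
    have h3 : Real.pi • c = L := by
      rw [hc, Complex.real_smul]
      rw [← mul_div_assoc]
      exact mul_div_cancel_left₀ L (Complex.ofReal_ne_zero.2 Real.pi_ne_zero)
    rwa [h3] at h2
  have hH : UniformContinuous fun x => F x - φ x := by
    apply (hFc.sub hφc).uniformContinuous_of_tendsto_cocompact (x := (0:ℂ))
    rw [cocompact_eq_atBot_atTop, tendsto_sup]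
    constructor
    · have h := hFbot.sub hφbot; rw [sub_zero] at h; exact h
    · have h := hFtop.sub hφtop; rw [sub_self] at h; exact h
  have : F = fun x => (F x - φ x) + φ x := by funext x; ring
  rw [this]
  exact hH.add hφuc


theorem stmt14 (F : ℝ → ℂ) (hF : BcR F)
    (ψ : ℝ → ℂ) (hψi : Integrable ψ) (hψ1 : (∫ t : ℝ, ψ t) = 1)
    (ψhat : ℝ → ℂ)
    (hψhat : ∀ s : ℝ, ψhat s = ∫ t : ℝ, Complex.exp (-Complex.I*(s:ℂ)*(t:ℂ)) * ψ t)
    (hdiff : Differentiable ℝ ψhat)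
    (hftc : ∀ s : ℝ, ψhat s = ψhat 0 + ∫ σ in (0:ℝ)..s, deriv ψhat σ)
    (hL1 : Integrable (fun s : ℝ => (s:ℂ)^2 * ψhat s))
    (hL2 : Integrable (fun s : ℝ => (s:ℂ)^2 * deriv ψhat s))
    (hbv : BoundedVariationOn (fun s : ℝ => (s:ℂ)^2 * deriv ψhat s) Set.univ) :
    Tendsto (fun a : ℝ => ⨆ x : ℝ, ‖F x - ∫ t : ℝ, F (x - t) * (ψ (t/a)/(a:ℂ))‖)
      (𝓝[>] (0:ℝ)) (𝓝 0) := by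
  have hFc : Continuous F := hF.1
  obtain ⟨C, hC0, hC⟩ := aux_bdd F hF
  have hUC := aux_uc F hF
  set M : ℝ := ∫ s : ℝ, ‖ψ s‖ with hM_def
  have hM : 0 ≤ M := integral_nonneg fun s => norm_nonneg _
  rw [Metric.tendsto_nhds]
  intro ε hε
  set η : ℝ := (ε/2)/(2*(M+1)) with hη_def
  have hη : 0 < η := by positivity
  set τ : ℝ := (ε/2)/(4*(C+1)) with hτ_def
  have hτ : 0 < τ := by positivity
  obtain ⟨δ, hδ0, hδ⟩ := Metric.uniformContinuous_iff.1 hUC η hη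
  obtain ⟨b₀, hb₀⟩ := eventually_atTop.1 ((aux_tail ψ hψi).eventually_lt_const hτ)
  set b₁ : ℝ := max b₀ 1 with hb₁_def
  have hb₁ : 0 < b₁ := lt_of_lt_of_le one_pos (le_max_right _ _)
  set a₀ : ℝ := (δ/2)/b₁ with ha₀_def
  have ha₀ : 0 < a₀ := by positivity
  filter_upwards [Ioo_mem_nhdsGT_of_mem (⟨le_refl (0:ℝ), ha₀⟩ : (0:ℝ) ∈ Set.Ico 0 a₀)]
    with a ha
  obtain ⟨ha1, ha2⟩ := ha
  -- the radius after rescaling is large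
  have hr : b₀ ≤ (δ/2)/a := by
    have h1 : (δ/2)/a₀ = b₁ := by
      rw [ha₀_def]
      field_simp
    have h2 : (δ/2)/a₀ < (δ/2)/a := div_lt_div_of_pos_left (by positivity) ha1 ha2
    have h3 : b₀ ≤ b₁ := le_max_left _ _
    linarith
  have hgint : Integrable (fun t : ℝ => ψ (t/a) / (a:ℂ)) :=
    (hψi.comp_div ha1.ne').div_const _
  have key : ∀ x : ℝ, ‖F x - ∫ t : ℝ, F (x - t) * (ψ (t/a)/(a:ℂ))‖ ≤ ε/2 := by
    intro x
    have hFcont : Continuous fun t : ℝ => F (x - t) :=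
      hFc.comp (continuous_const.sub continuous_id)
    have hFg : Integrable (fun t : ℝ => F (x - t) * (ψ (t/a)/(a:ℂ))) :=
      hgint.bdd_mul hFcont.aestronglyMeasurable (ae_of_all _ fun t => hC _)
    have hdbound : ∀ t : ℝ, ‖F x - F (x - t)‖ ≤ 2*C := by
      intro t
      calc ‖F x - F (x - t)‖ ≤ ‖F x‖ + ‖F (x - t)‖ := norm_sub_le _ _
        _ ≤ 2*C := by have := hC x; have := hC (x - t); linarith
    have e1 : F x - (∫ t : ℝ, F (x - t) * (ψ (t/a)/(a:ℂ)))
        = ∫ t : ℝ, (F x - F (x - t)) * (ψ (t/a)/(a:ℂ)) := by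
      have h2 : ∫ t : ℝ, (F x - F (x - t)) * (ψ (t/a)/(a:ℂ))
          = F x * (∫ t : ℝ, ψ (t/a)/(a:ℂ)) - ∫ t : ℝ, F (x - t) * (ψ (t/a)/(a:ℂ)) := by
        simp_rw [sub_mul]
        rw [integral_sub (hgint.const_mul (F x)) hFg, integral_const_mul]
      rw [h2, aux_one ψ hψ1 a ha1, mul_one]
    set u : ℝ → ℝ := fun t => ‖F x - F (x - t)‖ * ‖ψ (t/a)/(a:ℂ)‖ with hu_def
    have hu : Integrable u :=
      hgint.norm.bdd_mul (continuous_const.sub hFcont).norm.aestronglyMeasurable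
        (ae_of_all _ fun t => by rw [norm_norm]; exact hdbound t)
    have e2 : ‖∫ t : ℝ, (F x - F (x - t)) * (ψ (t/a)/(a:ℂ))‖ ≤ ∫ t : ℝ, u t := by
      refine le_trans (norm_integral_le_integral_norm _) (le_of_eq ?_)
      simp_rw [hu_def, norm_mul]
    set S : Set ℝ := Metric.closedBall (0:ℝ) (δ/2) with hS_def
    have hsplit : (∫ t : ℝ, u t) = (∫ t in S, u t) + ∫ t in Sᶜ, u t :=
      (integral_add_compl measurableSet_closedBall hu).symm
    have hb1 : (∫ t in S, u t) ≤ η * M := by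
      have hstep : (∫ t in S, u t) ≤ ∫ t in S, η * ‖ψ (t/a)/(a:ℂ)‖ := by
        refine setIntegral_mono_on hu.integrableOn
          ((hgint.norm.const_mul η).integrableOn) measurableSet_closedBall ?_
        intro t ht
        refine mul_le_mul_of_nonneg_right ?_ (norm_nonneg _)
        rw [hS_def] at ht
        have ht' : |t| ≤ δ/2 := by
          simpa [Real.dist_eq] using ht
        have hd : dist x (x - t) < δ := by
          rw [Real.dist_eq]
          have hxt : x - (x - t) = t := by ring
          rw [hxt]; linarith
        have := hδ hd
        rw [dist_eq_norm] at this
        exact this.le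
      have hstep2 : (∫ t in S, η * ‖ψ (t/a)/(a:ℂ)‖) ≤ η * M := by
        calc (∫ t in S, η * ‖ψ (t/a)/(a:ℂ)‖) = η * ∫ t in S, ‖ψ (t/a)/(a:ℂ)‖ :=
            integral_const_mul η _
          _ ≤ η * ∫ t : ℝ, ‖ψ (t/a)/(a:ℂ)‖ := by
            refine mul_le_mul_of_nonneg_left ?_ hη.le
            exact setIntegral_le_integral hgint.norm (ae_of_all _ fun t => norm_nonneg _)
          _ = η * M := by rw [aux_norm ψ a ha1]
      linarith
    have hb2 : (∫ t in Sᶜ, u t) ≤ 2*C*τ := by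
      have hstep : (∫ t in Sᶜ, u t) ≤ ∫ t in Sᶜ, (2*C) * ‖ψ (t/a)/(a:ℂ)‖ :=
        setIntegral_mono_on hu.integrableOn
          ((hgint.norm.const_mul _).integrableOn) measurableSet_closedBall.compl
          (fun t _ => mul_le_mul_of_nonneg_right (hdbound t) (norm_nonneg _))
      have hstep2 : (∫ t in Sᶜ, (2*C) * ‖ψ (t/a)/(a:ℂ)‖)
          = 2*C * ∫ s in (Metric.closedBall (0:ℝ) ((δ/2)/a))ᶜ, ‖ψ s‖ := by
        rw [integral_const_mul, aux_cov ψ a (δ/2) ha1]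
      have htail : (∫ s in (Metric.closedBall (0:ℝ) ((δ/2)/a))ᶜ, ‖ψ s‖) ≤ τ :=
        (hb₀ _ hr).le
      calc (∫ t in Sᶜ, u t) ≤ _ := hstep
        _ = 2*C * ∫ s in (Metric.closedBall (0:ℝ) ((δ/2)/a))ᶜ, ‖ψ s‖ := hstep2
        _ ≤ 2*C*τ := by nlinarith
    have hA : η * M ≤ ε/4 := by
      rw [hη_def, div_mul_eq_mul_div, div_le_iff₀ (by positivity)]
      nlinarith
    have hB : 2*C*τ ≤ ε/4 := by
      rw [hτ_def, ← mul_div_assoc, div_le_iff₀ (show (0:ℝ) < 4*(C+1) by positivity)]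
      nlinarith
    calc ‖F x - ∫ t : ℝ, F (x - t) * (ψ (t/a)/(a:ℂ))‖
        = ‖∫ t : ℝ, (F x - F (x - t)) * (ψ (t/a)/(a:ℂ))‖ := by rw [e1]
      _ ≤ ∫ t : ℝ, u t := e2
      _ = (∫ t in S, u t) + ∫ t in Sᶜ, u t := hsplit
      _ ≤ η * M + 2*C*τ := add_le_add hb1 hb2
      _ ≤ ε/4 + ε/4 := add_le_add hA hB
      _ = ε/2 := by ring
  have hsupnn : 0 ≤ ⨆ x : ℝ, ‖F x - ∫ t : ℝ, F (x - t) * (ψ (t/a)/(a:ℂ))‖ :=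
    Real.iSup_nonneg fun x => norm_nonneg _
  have hsup : (⨆ x : ℝ, ‖F x - ∫ t : ℝ, F (x - t) * (ψ (t/a)/(a:ℂ))‖) ≤ ε/2 :=
    Real.iSup_le key (by positivity)
  rw [Real.dist_eq, sub_zero, abs_of_nonneg hsupnn]
  linarith
end

section
/- For every x ∈ ℝ and every Schwartz function φ : ℝ → ℂ, ∫_{−∞}^{∞} v_{−x}(t)·φ̂(t) dt = π·∫_{−∞}^{∞} (−|y| + x·sgn(y) + |y − x|)·φ(y) dy, where φ̂(t) = ∫_{−∞}^{∞} e^{−i·y·t} φ(y) dy. (That is, the Fourier transform of v_{−x} in the sense of tempered distributions is the function y ↦ π·(−|y| + x·sgn(y) + |y − x|).) -/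
open MeasureTheory Filter Topology Real Complex FourierTransform SchwartzMap intervalIntegral

lemma hasDeriv_exp (t u : ℝ) :
    HasDerivAt (fun u : ℝ => Complex.exp (-Complex.I * u * t))
      (-Complex.I * t * Complex.exp (-Complex.I * u * t)) u := by
  have h0 : HasDerivAt (fun u : ℝ => (u : ℂ) * (-Complex.I * t)) ((1:ℝ) • (-Complex.I * t)) u := by
    simpa [Complex.real_smul] using (hasDerivAt_id u).smul_const (-Complex.I * (t:ℂ))
  have h1 := h0.cexp
  have he : (fun u : ℝ => Complex.exp ((u:ℂ) * (-Complex.I * t)))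
      = fun u : ℝ => Complex.exp (-Complex.I * u * t) := by
    funext w; ring_nf
  rw [he] at h1
  convert h1 using 1
  simp [Complex.real_smul]
  ring_nf

lemma v_eq (s t : ℝ) :
    v s t = ∫ u in (0:ℝ)..s, ((s:ℂ) - u) * Complex.exp (-Complex.I * u * t) := by
  rcases eq_or_ne t 0 with rfl | ht
  · simp only [v, if_pos rfl]
    have he : ∀ u : ℝ, ((s:ℂ) - u) * Complex.exp (-Complex.I * u * (0:ℝ)) = ((s - u : ℝ) : ℂ) := by
      intro u; simp
    rw [intervalIntegral.integral_congr (fun u _ => he u), intervalIntegral.integral_ofReal]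
    rw [intervalIntegral.integral_sub intervalIntegrable_const intervalIntegral.intervalIntegrable_id]
    simp
    ring
  · simp only [v, if_neg ht]
    set G : ℝ → ℂ := fun u =>
      (Complex.I / t) * (((s:ℂ) - u) * Complex.exp (-Complex.I * u * t))
        - Complex.exp (-Complex.I * u * t) / (t:ℂ)^2 with hG
    have hd : ∀ u ∈ Set.uIcc (0:ℝ) s,
        HasDerivAt G (((s:ℂ) - u) * Complex.exp (-Complex.I * u * t)) u := by
      intro u _
      have hsub : HasDerivAt (fun u : ℝ => (s:ℂ) - u) (-1) u := by
        simpa using ((hasDerivAt_id u).smul_const (1:ℂ)).const_sub (s:ℂ)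
      have h1 := ((hsub.mul (hasDeriv_exp t u)).const_mul (Complex.I / t)).sub
        ((hasDeriv_exp t u).div_const ((t:ℂ)^2))
      refine h1.congr_deriv ?_
      have htc : (t:ℂ) ≠ 0 := by exact_mod_cast ht
      field_simp
      ring_nf
      simp only [Complex.I_sq]
      ring
    have hint : IntervalIntegrable (fun u : ℝ => ((s:ℂ) - u) * Complex.exp (-Complex.I * u * t))
        volume 0 s := by
      apply Continuous.intervalIntegrable
      fun_prop
    rw [intervalIntegral.integral_eq_sub_of_hasDerivAt hd hint]
    have htc : (t:ℂ) ≠ 0 := by exact_mod_cast ht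
    simp only [hG]
    push_cast
    simp only [Complex.ofReal_zero, mul_zero, zero_mul, Complex.exp_zero]
    field_simp
    ring

lemma inner_eval (φ : SchwartzMap ℝ ℂ) (u : ℝ) :
    ∫ t : ℝ, Complex.exp (-Complex.I * u * t) * (fourierTransformCLM ℂ φ) (t / (2*π))
      = (2*π : ℝ) * φ (-u) := by
  set ψ := fourierTransformCLM ℂ φ with hψ
  have key : ∀ t : ℝ, Complex.exp (-Complex.I * u * t) * ψ (t / (2*π))
      = (fun ξ : ℝ => Complex.exp ((↑(-2 * π * ξ * u)) * Complex.I) * ψ ξ) (t / (2*π)) := by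
    intro t
    have h2π : (2*π : ℝ) ≠ 0 := by positivity
    congr 2
    push_cast
    field_simp [Complex.ofReal_ne_zero.mpr Real.pi_ne_zero]
  rw [integral_congr_ae (Filter.Eventually.of_forall key)]
  rw [MeasureTheory.Measure.integral_comp_div (fun ξ : ℝ => Complex.exp ((↑(-2 * π * ξ * u)) * Complex.I) * ψ ξ) (2*π)]
  have hFT : ∫ ξ : ℝ, Complex.exp ((↑(-2 * π * ξ * u)) * Complex.I) * ψ ξ = 𝓕 (⇑ψ) u := by
    rw [Real.fourier_real_eq_integral_exp_smul]
    simp [smul_eq_mul]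
  rw [hFT]
  have hinv : 𝓕 (⇑ψ) u = φ (-u) := by
    have h1 : ⇑ψ = 𝓕 ⇑φ := by rw [hψ]; exact SchwartzMap.fourier_coe φ
    rw [h1]
    have h2 : 𝓕 (𝓕 ⇑φ) u = 𝓕⁻ (𝓕 ⇑φ) (-u) := by
      rw [Real.fourierInv_eq_fourier_neg, neg_neg]
    rw [h2, φ.continuous.fourierInv_fourier_eq (φ.integrable) (by rw [← h1]; exact ψ.integrable)]
  rw [hinv]
  rw [abs_of_pos (by positivity : (0:ℝ) < 2*π)]
  simp [Complex.real_smul]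

lemma fubini_step (ψ : SchwartzMap ℝ ℂ) (s : ℝ) :
    ∫ t : ℝ, (∫ u in (0:ℝ)..s, ((s:ℂ) - u) * Complex.exp (-Complex.I * u * t)) * ψ (t / (2*π))
      = ∫ u in (0:ℝ)..s, ((s:ℂ) - u) * ∫ t : ℝ, Complex.exp (-Complex.I * u * t) * ψ (t / (2*π)) := by
  have h2π : (2*π : ℝ) ≠ 0 := by positivity
  set g : ℝ → ℂ := fun t => ψ (t / (2*π)) with hg
  have hgint : Integrable g := ψ.integrable.comp_div h2π
  have hgcont : Continuous g := ψ.continuous.comp (continuous_id.div_const _)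
  set H : ℝ → ℝ → ℂ := fun t u => ((s:ℂ) - u) * Complex.exp (-Complex.I * u * t) * g t with hH
  haveI hfin : IsFiniteMeasure (volume.restrict (Set.uIoc (0:ℝ) s)) :=
    ⟨by rw [Measure.restrict_apply_univ]; simp only [Set.uIoc]; exact measure_Ioc_lt_top⟩
  have hHcont : Continuous (Function.uncurry H) := by
    apply Continuous.mul
    · apply Continuous.mul
      · fun_prop
      · apply Complex.continuous_exp.comp
        fun_prop
    · exact hgcont.comp continuous_fst
  have hint : Integrable (Function.uncurry H)
      (volume.prod (volume.restrict (Set.uIoc (0:ℝ) s))) := by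
    have hbd : Integrable (fun u : ℝ => |s| + |u|) (volume.restrict (Set.uIoc (0:ℝ) s)) := by
      exact Continuous.integrableOn_uIoc (by fun_prop)
    have hbound : Integrable (fun p : ℝ × ℝ => ‖g p.1‖ * (|s| + |p.2|))
        (volume.prod (volume.restrict (Set.uIoc (0:ℝ) s))) :=
      hgint.norm.mul_prod hbd
    apply Integrable.mono' hbound (hHcont.aestronglyMeasurable)
    apply Filter.Eventually.of_forall
    rintro ⟨t, u⟩
    simp only [Function.uncurry, hH, norm_mul]
    have h1 : ‖Complex.exp (-Complex.I * u * t)‖ = 1 := by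
      rw [Complex.norm_exp]
      simp
    rw [h1, mul_one]
    have h2 : ‖(s:ℂ) - (u:ℂ)‖ ≤ |s| + |u| := by
      rw [← Complex.ofReal_sub, Complex.norm_real]
      exact (abs_sub _ _)
    calc ‖(s:ℂ) - (u:ℂ)‖ * ‖g t‖ ≤ (|s| + |u|) * ‖g t‖ :=
          mul_le_mul_of_nonneg_right h2 (norm_nonneg _)
      _ = ‖g t‖ * (|s| + |u|) := mul_comm _ _
  calc ∫ t : ℝ, (∫ u in (0:ℝ)..s, ((s:ℂ) - u) * Complex.exp (-Complex.I * u * t)) * g t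
      = ∫ t : ℝ, ∫ u in (0:ℝ)..s, H t u := by
        congr 1; funext t
        rw [← intervalIntegral.integral_mul_const]
    _ = ∫ t : ℝ, (if (0:ℝ) ≤ s then (1:ℝ) else -1) • ∫ u in Set.uIoc (0:ℝ) s, H t u := by
        congr 1; funext t
        rw [intervalIntegral.intervalIntegral_eq_integral_uIoc]
    _ = (if (0:ℝ) ≤ s then (1:ℝ) else -1) • ∫ t : ℝ, ∫ u in Set.uIoc (0:ℝ) s, H t u := by
        rw [MeasureTheory.integral_smul]
    _ = (if (0:ℝ) ≤ s then (1:ℝ) else -1) • ∫ u in Set.uIoc (0:ℝ) s, ∫ t : ℝ, H t u := by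
        rw [integral_integral_swap hint]
    _ = ∫ u in (0:ℝ)..s, ∫ t : ℝ, H t u := by
        rw [intervalIntegral.intervalIntegral_eq_integral_uIoc]
    _ = ∫ u in (0:ℝ)..s, ((s:ℂ) - u) * ∫ t : ℝ, Complex.exp (-Complex.I * u * t) * g t := by
        apply intervalIntegral.integral_congr
        intro u _
        simp only [hH]
        rw [← MeasureTheory.integral_const_mul]
        simp only [mul_assoc]

lemma rhs_eq (x : ℝ) (φ : SchwartzMap ℝ ℂ) :
    ∫ y : ℝ, (((-|y| + x * Real.sign y + |y - x|) : ℝ) : ℂ) * φ y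
      = ∫ y in x..(0:ℝ), (2*((y:ℂ) - x)) * φ y := by
  have h0 : ∀ᵐ y : ℝ, y ≠ (0:ℝ) := by
    rw [MeasureTheory.ae_iff]
    have : {a : ℝ | ¬ a ≠ 0} = {0} := by ext a; simp
    rw [this]
    exact Real.volume_singleton
  rcases le_total 0 x with hx | hx
  · have key : ∀ y : ℝ, y ≠ 0 →
        (((-|y| + x * Real.sign y + |y - x|) : ℝ) : ℂ) * φ y
          = Set.indicator (Set.Ioc 0 x) (fun y : ℝ => (2*((x:ℂ) - y)) * φ y) y := by
      intro y hy
      by_cases hmem : y ∈ Set.Ioc 0 x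
      · rw [Set.indicator_of_mem hmem]
        obtain ⟨h1, h2⟩ := hmem
        have : -|y| + x * Real.sign y + |y - x| = 2*(x - y) := by
          rw [Real.sign_of_pos h1, abs_of_pos h1, abs_of_nonpos (by linarith : y - x ≤ 0)]
          ring
        rw [this]; push_cast; ring
      · rw [Set.indicator_of_notMem hmem]
        rcases lt_or_gt_of_ne hy with hneg | hpos
        · have : -|y| + x * Real.sign y + |y - x| = 0 := by
            rw [Real.sign_of_neg hneg, abs_of_neg hneg, abs_of_neg (by linarith : y - x < 0)]
            ring
          rw [this]; simp
        · have hgt : x < y := by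
            by_contra h
            exact hmem ⟨hpos, not_lt.mp h⟩
          have : -|y| + x * Real.sign y + |y - x| = 0 := by
            rw [Real.sign_of_pos hpos, abs_of_pos hpos, abs_of_pos (by linarith : 0 < y - x)]
            ring
          rw [this]; simp
    rw [integral_congr_ae ((h0.mono) fun y hy => key y hy)]
    rw [MeasureTheory.integral_indicator measurableSet_Ioc]
    rw [← intervalIntegral.integral_of_le hx, intervalIntegral.integral_symm]
    rw [← intervalIntegral.integral_neg]
    apply intervalIntegral.integral_congr
    intro y _
    ring
  · have key : ∀ y : ℝ, y ≠ 0 →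
        (((-|y| + x * Real.sign y + |y - x|) : ℝ) : ℂ) * φ y
          = Set.indicator (Set.Ioc x 0) (fun y : ℝ => (2*((y:ℂ) - x)) * φ y) y := by
      intro y hy
      by_cases hmem : y ∈ Set.Ioc x 0
      · rw [Set.indicator_of_mem hmem]
        obtain ⟨h1, h2⟩ := hmem
        have hneg : y < 0 := lt_of_le_of_ne h2 hy
        have : -|y| + x * Real.sign y + |y - x| = 2*(y - x) := by
          rw [Real.sign_of_neg hneg, abs_of_neg hneg, abs_of_pos (by linarith : 0 < y - x)]
          ring
        rw [this]; push_cast; ring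
      · rw [Set.indicator_of_notMem hmem]
        rcases lt_or_gt_of_ne hy with hneg | hpos
        · have hle : y ≤ x := by
            by_contra h
            exact hmem ⟨not_le.mp h, le_of_lt hneg⟩
          have : -|y| + x * Real.sign y + |y - x| = 0 := by
            rcases eq_or_lt_of_le hle with rfl | hlt
            · rw [Real.sign_of_neg hneg, abs_of_neg hneg]; simp
            · rw [Real.sign_of_neg hneg, abs_of_neg hneg, abs_of_neg (by linarith : y - x < 0)]
              ring
          rw [this]; simp
        · have : -|y| + x * Real.sign y + |y - x| = 0 := by
            rw [Real.sign_of_pos hpos, abs_of_pos hpos, abs_of_pos (by linarith : 0 < y - x)]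
            ring
          rw [this]; simp
    rw [integral_congr_ae ((h0.mono) fun y hy => key y hy)]
    rw [MeasureTheory.integral_indicator measurableSet_Ioc]
    rw [← intervalIntegral.integral_of_le hx]

theorem stmt16 (x : ℝ) (φ : SchwartzMap ℝ ℂ) :
    ∫ t : ℝ, v (-x) t * (∫ y : ℝ, Complex.exp (-Complex.I*(y:ℂ)*(t:ℂ)) * φ y)
      = (π:ℂ) * ∫ y : ℝ, (((-|y| + x * Real.sign y + |y - x|) : ℝ) : ℂ) * φ y := by
  have hhat : ∀ t : ℝ, (∫ y : ℝ, Complex.exp (-Complex.I*(y:ℂ)*(t:ℂ)) * φ y)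
      = (fourierTransformCLM ℂ φ) (t / (2*π)) := by
    intro t
    have h1 : (fourierTransformCLM ℂ φ) (t/(2*π)) = 𝓕 (⇑φ) (t/(2*π)) := rfl
    rw [h1, Real.fourier_real_eq_integral_exp_smul]
    apply MeasureTheory.integral_congr_ae
    apply Filter.Eventually.of_forall
    intro y
    simp only [smul_eq_mul]
    congr 2
    push_cast
    field_simp [Complex.ofReal_ne_zero.mpr Real.pi_ne_zero]
  have step1 : ∫ t : ℝ, v (-x) t * (∫ y : ℝ, Complex.exp (-Complex.I*(y:ℂ)*(t:ℂ)) * φ y)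
      = ∫ t : ℝ, (∫ u in (0:ℝ)..(-x), (((-x : ℝ):ℂ) - u) * Complex.exp (-Complex.I * u * t))
          * (fourierTransformCLM ℂ φ) (t / (2*π)) := by
    congr 1; funext t; rw [hhat t, v_eq]
  rw [step1, fubini_step (fourierTransformCLM ℂ φ) (-x)]
  have step2 : ∀ u ∈ Set.uIcc (0:ℝ) (-x),
      (((-x : ℝ):ℂ) - u) * ∫ t : ℝ, Complex.exp (-Complex.I * u * t)
          * (fourierTransformCLM ℂ φ) (t / (2*π))
        = (2*π : ℝ) * ((((-x : ℝ):ℂ) - u) * φ (-u)) := by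
    intro u _
    rw [inner_eval φ u]
    ring
  rw [intervalIntegral.integral_congr step2, intervalIntegral.integral_const_mul]
  have step3 : ∀ u ∈ Set.uIcc (0:ℝ) (-x),
      (((-x : ℝ):ℂ) - u) * φ (-u)
        = (fun y : ℝ => (((y : ℂ) - x)) * φ y) (-u) := by
    intro u _
    push_cast
    ring
  rw [intervalIntegral.integral_congr step3,
    intervalIntegral.integral_comp_neg (fun y : ℝ => (((y : ℂ) - x)) * φ y)]
  rw [rhs_eq x φ]
  simp only [neg_zero, neg_neg]
  have h2 : ∫ y in x..(0:ℝ), (2*((y:ℂ) - x)) * φ y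
      = 2 * ∫ y in x..(0:ℝ), ((y:ℂ) - x) * φ y := by
    rw [← intervalIntegral.integral_const_mul]
    apply intervalIntegral.integral_congr
    intro y _; ring
  rw [h2]
  push_cast
  ring
end

section
/- Let φ₁, φ₂ ∈ L¹(ℝ;ℂ) and define g_k(x) = ∫_{−∞}^x φ_k(t) dt for k = 1, 2 (so g_k is absolutely continuous with g_k′ = φ_k a.e.). Assume x ↦ x·g_k(x) ∈ L¹(ℝ) and t ↦ t²·φ_k(t) ∈ L¹(ℝ) for k = 1, 2 (then also g_k ∈ L¹(ℝ) and t ↦ t·φ_k(t) ∈ L¹(ℝ)). Let g = g₁ * g₂ be the convolution; then g(x) = ∫_{−∞}^x (g₁*φ₂)(v) dv. Then: (i) x ↦ x·g(x) is of bounded variation on ℝ with variation at most ‖p₁g₁‖₁·‖φ₂‖₁ + ‖g₁‖₁·‖p₁φ₂‖₁ + ‖g₁‖₁·‖g₂‖₁; and (ii) x ↦ x²·(g₁*φ₂)(x) is of bounded variation on ℝ with variation at most 2‖p₁g₁‖₁·‖φ₂‖₁ + 2‖g₁‖₁·‖p₁φ₂‖₁ + ‖p₂φ₁‖₁·‖φ₂‖₁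 + 2‖p₁φ₁‖₁·‖p₁φ₂‖₁ + ‖φ₁‖₁·‖p₂φ₂‖₁. Here ‖p_n·w‖₁ denotes ∫_{−∞}^{∞} |xⁿ·w(x)| dx. -/
open MeasureTheory Filter Topology

section Stmt17Aux
open Set

private lemma aemeas_of_xmul {g : ℝ → ℂ}
    (hxg : Integrable (fun x : ℝ => (x:ℂ) * g x)) :
    AEStronglyMeasurable g volume := by
  have h0 : ∀ᵐ (y : ℝ) ∂volume, y ≠ 0 := by
    rw [ae_iff]
    simp only [ne_eq, not_not]
    rw [show {y : ℝ | y = 0} = {0} from Set.setOf_eq_eq_singleton]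
    exact measure_singleton 0
  refine AEStronglyMeasurable.congr
    (((Complex.measurable_ofReal.inv).aestronglyMeasurable).mul hxg.aestronglyMeasurable) ?_
  filter_upwards [h0] with y hy
  simp only [Pi.mul_apply, Pi.inv_apply]
  rw [← mul_assoc, inv_mul_cancel₀ (Complex.ofReal_ne_zero.mpr hy), one_mul]

private lemma int_of_xint {g : ℝ → ℂ} (hm : AEStronglyMeasurable g volume) {C : ℝ}
    (hC : 0 ≤ C) (hbdd : ∀ x : ℝ, ‖g x‖ ≤ C)
    (hxg : Integrable (fun x : ℝ => (x:ℂ) * g x)) : Integrable g := by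
  have hind : Integrable ((Icc (-1:ℝ) 1).indicator (fun _ => C)) := by
    rw [integrable_indicator_iff measurableSet_Icc]
    refine integrableOn_const (lt_top_iff_ne_top.1 ?_)
    rw [Real.volume_Icc]; exact ENNReal.ofReal_lt_top
  refine Integrable.mono' (hxg.norm.add hind) hm (Filter.Eventually.of_forall fun x => ?_)
  simp only [Pi.add_apply]
  by_cases hx : |x| ≤ 1
  · have hmem : x ∈ Icc (-1:ℝ) 1 := abs_le.1 hx
    rw [Set.indicator_of_mem hmem]
    have := hbdd x
    have := norm_nonneg ((x:ℂ) * g x)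
    linarith
  · have h1 : (1:ℝ) ≤ |x| := le_of_not_ge hx
    have h2 : ‖(x:ℂ) * g x‖ = |x| * ‖g x‖ := by
      rw [norm_mul, Complex.norm_real, Real.norm_eq_abs]
    have h3 : (0:ℝ) ≤ (Icc (-1:ℝ) 1).indicator (fun _ => C) x :=
      Set.indicator_nonneg (fun _ _ => hC) x
    nlinarith [norm_nonneg (g x)]

private lemma int_mul_of_sq {φ : ℝ → ℂ} (hφ : Integrable φ)
    (h2 : Integrable (fun t : ℝ => (t:ℂ)^2 * φ t)) :
    Integrable (fun t : ℝ => (t:ℂ) * φ t) := by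
  refine Integrable.mono' (hφ.norm.add h2.norm)
    ((Complex.measurable_ofReal.aestronglyMeasurable).mul hφ.aestronglyMeasurable)
    (Filter.Eventually.of_forall fun t => ?_)
  simp only [Pi.add_apply]
  have h3 : ‖(t:ℂ) * φ t‖ = |t| * ‖φ t‖ := by
    rw [norm_mul, Complex.norm_real, Real.norm_eq_abs]
  have h4 : ‖(t:ℂ)^2 * φ t‖ = |t|^2 * ‖φ t‖ := by
    rw [norm_mul, norm_pow, Complex.norm_real, Real.norm_eq_abs]
  rw [h3, h4]
  by_cases h : |t| ≤ 1
  · nlinarith [norm_nonneg (φ t), abs_nonneg t]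
  · have h1 : 1 ≤ |t| := le_of_not_ge h
    nlinarith [norm_nonneg (φ t), abs_nonneg t,
      mul_nonneg (mul_nonneg (sub_nonneg.2 h1) (abs_nonneg t)) (norm_nonneg (φ t))]

private lemma convI {f ψ : ℝ → ℂ} (hf : Integrable f) (hψ : Integrable ψ) :
    Integrable (fun p : ℝ × ℝ => f (p.1 - p.2) * ψ p.2)
      ((volume : Measure ℝ).prod volume) := by
  have h := hψ.convolution_integrand (ContinuousLinearMap.mul ℝ ℂ) hf
  have he : (fun p : ℝ × ℝ => f (p.1 - p.2) * ψ p.2)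
      = fun p : ℝ × ℝ => (ContinuousLinearMap.mul ℝ ℂ) (ψ p.2) (f (p.1 - p.2)) := by
    funext p; simp [mul_comm]
  rw [he]; exact h

private lemma normIntegralConv {W : ℝ × ℝ → ℂ}
    (hW : Integrable W ((volume : Measure ℝ).prod volume)) :
    (∫ v : ℝ, ‖∫ t : ℝ, W (v, t)‖) ≤ ∫ p, ‖W p‖ ∂((volume : Measure ℝ).prod volume) := by
  have h1 : (∫ v : ℝ, ‖∫ t : ℝ, W (v, t)‖) ≤ ∫ v : ℝ, ∫ t : ℝ, ‖W (v, t)‖ := by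
    refine integral_mono hW.integral_prod_left.norm hW.norm.integral_prod_left ?_
    intro v; exact norm_integral_le_integral_norm _
  have h2 : (∫ v : ℝ, ∫ t : ℝ, ‖W (v, t)‖) = ∫ p, ‖W p‖ ∂((volume : Measure ℝ).prod volume) :=
    integral_integral hW.norm
  linarith

private lemma normprodConv {f ψ : ℝ → ℂ} (hf : Integrable f) (hψ : Integrable ψ) :
    (∫ p : ℝ × ℝ, ‖f (p.1 - p.2) * ψ p.2‖ ∂((volume : Measure ℝ).prod volume))
      = (∫ x : ℝ, ‖f x‖) * (∫ t : ℝ, ‖ψ t‖) := by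
  have hW := (convI hf hψ).norm
  have h1 : (∫ p : ℝ × ℝ, ‖f (p.1 - p.2) * ψ p.2‖ ∂((volume : Measure ℝ).prod volume))
      = ∫ t : ℝ, ∫ v : ℝ, ‖f (v - t) * ψ t‖ :=
    (integral_integral (f := fun v t => ‖f (v - t) * ψ t‖) hW).symm.trans
      (integral_integral_swap (f := fun v t => ‖f (v - t) * ψ t‖) hW)
  rw [h1]
  have h2 : ∀ t : ℝ, (∫ v : ℝ, ‖f (v - t) * ψ t‖) = (∫ x : ℝ, ‖f x‖) * ‖ψ t‖ := by
    intro t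
    calc (∫ v : ℝ, ‖f (v - t) * ψ t‖) = ∫ v : ℝ, ‖f (v - t)‖ * ‖ψ t‖ := by
          simp [norm_mul]
      _ = (∫ v : ℝ, ‖f (v - t)‖) * ‖ψ t‖ := integral_mul_const _ _
      _ = (∫ x : ℝ, ‖f x‖) * ‖ψ t‖ := by rw [integral_sub_right_eq_self (fun v => ‖f v‖) t]
  simp_rw [h2]
  rw [integral_const_mul]

private lemma evar_le {h : ℝ → ℂ} (hh : Integrable h) {F : ℝ → ℂ}
    (hF : ∀ x : ℝ, F x = ∫ t in Set.Iic x, h t) :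
    eVariationOn F Set.univ ≤ ENNReal.ofReal (∫ t : ℝ, ‖h t‖) := by
  apply iSup_le
  rintro ⟨n, u, hu, -⟩
  have hmono : Monotone u := hu
  calc ∑ i ∈ Finset.range n, edist (F (u (i+1))) (F (u i))
      ≤ ∑ i ∈ Finset.range n, ENNReal.ofReal (∫ t in (u i)..(u (i+1)), ‖h t‖) := by
        refine Finset.sum_le_sum fun i _ => ?_
        rw [edist_dist, dist_eq_norm, hF, hF,
          intervalIntegral.integral_Iic_sub_Iic hh.integrableOn hh.integrableOn]
        exact ENNReal.ofReal_le_ofReal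
          (intervalIntegral.norm_integral_le_integral_norm (hmono (Nat.le_succ i)))
    _ = ENNReal.ofReal (∑ i ∈ Finset.range n, ∫ t in (u i)..(u (i+1)), ‖h t‖) := by
        rw [ENNReal.ofReal_sum_of_nonneg]
        intro i _
        exact intervalIntegral.integral_nonneg (hmono (Nat.le_succ i)) (fun t _ => norm_nonneg _)
    _ = ENNReal.ofReal (∫ t in (u 0)..(u n), ‖h t‖) := by
        rw [intervalIntegral.sum_integral_adjacent_intervals]
        intro i _
        exact hh.norm.intervalIntegrable
    _ ≤ ENNReal.ofReal (∫ t : ℝ, ‖h t‖) := by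
        apply ENNReal.ofReal_le_ofReal
        rw [intervalIntegral.integral_of_le (hmono (Nat.zero_le n))]
        exact setIntegral_le_integral hh.norm (Filter.Eventually.of_forall fun t => norm_nonneg _)


private lemma keyB {f ψ : ℝ → ℂ} (hf : Integrable f) (hψ : Integrable ψ)
    {Ψ : ℝ → ℂ} (hΨ : ∀ t : ℝ, Ψ t = ∫ s in Iic t, ψ s) (x : ℝ) :
    (∫ t : ℝ, f (x - t) * Ψ t) = ∫ v in Iic x, ∫ t : ℝ, f (v - t) * ψ t := by
  have hGmeas : MeasurableSet {q : ℝ × ℝ | q.2 ≤ q.1} :=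
    measurableSet_le measurable_snd measurable_fst
  have hfx : Integrable (fun t : ℝ => f (x - t)) := hf.comp_sub_left x
  have hprod : Integrable (fun q : ℝ × ℝ => f (x - q.1) * ψ q.2)
      ((volume : Measure ℝ).prod volume) := hfx.mul_prod hψ
  have hG : Integrable
      (fun q : ℝ × ℝ => ({q : ℝ × ℝ | q.2 ≤ q.1}).indicator (fun q => f (x - q.1) * ψ q.2) q)
      ((volume : Measure ℝ).prod volume) := by
    have := hprod.indicator hGmeas
    exact this
  -- LHS
  have hL : (∫ t : ℝ, f (x - t) * Ψ t)
      = ∫ s : ℝ, (∫ u in Iic (x - s), f u) * ψ s := by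
    calc (∫ t : ℝ, f (x - t) * Ψ t)
        = ∫ t : ℝ, ∫ s : ℝ,
            ({q : ℝ × ℝ | q.2 ≤ q.1}).indicator (fun q => f (x - q.1) * ψ q.2) (t, s) := by
          congr 1; funext t
          rw [hΨ t, ← integral_indicator measurableSet_Iic, ← integral_const_mul]
          congr 1; funext s
          by_cases hst : s ≤ t
          · simp [Set.indicator_apply, hst]
          · simp [Set.indicator_apply, hst]
      _ = ∫ s : ℝ, ∫ t : ℝ,
            ({q : ℝ × ℝ | q.2 ≤ q.1}).indicator (fun q => f (x - q.1) * ψ q.2) (t, s) :=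
          integral_integral_swap (f := fun t s =>
            ({q : ℝ × ℝ | q.2 ≤ q.1}).indicator (fun q => f (x - q.1) * ψ q.2) (t, s)) hG
      _ = ∫ s : ℝ, (∫ u in Iic (x - s), f u) * ψ s := by
          congr 1; funext s
          have h1 : ∀ t : ℝ,
              ({q : ℝ × ℝ | q.2 ≤ q.1}).indicator (fun q => f (x - q.1) * ψ q.2) (t, s)
              = ((Iic (x - s)).indicator f (x - t)) * ψ s := by
            intro t
            by_cases hst : s ≤ t
            · have h2 : x - t ≤ x - s := by linarith
              simp [Set.indicator_apply, hst, h2]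
            · have h2 : ¬ (x - t ≤ x - s) := by intro h'; exact hst (by linarith)
              simp [Set.indicator_apply, hst, h2]
          simp_rw [h1]
          rw [integral_mul_const, integral_sub_left_eq_self ((Iic (x - s)).indicator f) volume x,
            integral_indicator measurableSet_Iic]
  -- RHS
  have hconvr : Integrable (fun p : ℝ × ℝ => f (p.1 - p.2) * ψ p.2)
      ((volume.restrict (Iic x)).prod volume) := by
    rw [Measure.restrict_prod_eq_prod_univ]
    exact (convI hf hψ).restrict
  have hR : (∫ v in Iic x, ∫ t : ℝ, f (v - t) * ψ t)
      = ∫ t : ℝ, (∫ u in Iic (x - t), f u) * ψ t := by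
    calc (∫ v in Iic x, ∫ t : ℝ, f (v - t) * ψ t)
        = ∫ t : ℝ, ∫ v in Iic x, f (v - t) * ψ t :=
          integral_integral_swap (f := fun v t => f (v - t) * ψ t) hconvr
      _ = ∫ t : ℝ, (∫ u in Iic (x - t), f u) * ψ t := by
          congr 1; funext t
          rw [integral_mul_const]
          congr 1
          rw [← integral_indicator (μ := volume) measurableSet_Iic]
          have h1 : ∀ v : ℝ, (Iic x).indicator (fun v => f (v - t)) v
              = (Iic (x - t)).indicator f (v - t) := by
            intro v
            by_cases hv : v ≤ x
            · have h2 : v - t ≤ x - t := by linarith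
              simp [Set.indicator_apply, hv, h2]
            · have h2 : ¬ (v - t ≤ x - t) := by intro h'; exact hv (by linarith)
              simp [Set.indicator_apply, hv, h2]
          simp_rw [h1]
          rw [integral_sub_right_eq_self ((Iic (x - t)).indicator f) t,
            integral_indicator measurableSet_Iic]
  rw [hL, hR]

private lemma keyA {k : ℝ → ℂ} (hk : Integrable k)
    (htk : Integrable (fun t : ℝ => (t:ℂ) * k t))
    {K : ℝ → ℂ} (hK : ∀ y : ℝ, K y = ∫ t in Iic y, k t) (x : ℝ) :
    (x:ℂ) * K x = ∫ v in Iic x, (K v + (v:ℂ) * k v) := by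
  set μx := volume.restrict (Iic x) with hμx
  have hGmeas : MeasurableSet {q : ℝ × ℝ | q.2 ≤ q.1} :=
    measurableSet_le measurable_snd measurable_fst
  set F : ℝ × ℝ → ℂ := fun p => ({q : ℝ × ℝ | q.2 ≤ q.1}).indicator (fun q => k q.2) p with hFdef
  have hFsec : ∀ t : ℝ, (fun v => F (v, t)) = (Ici t).indicator (fun _ => k t) := by
    intro t; funext v
    by_cases h : t ≤ v <;> simp [hFdef, Set.indicator_apply, h]
  have hμxIci : ∀ t : ℝ, μx (Ici t) = volume (Icc t x) := by
    intro t
    rw [hμx, Measure.restrict_apply measurableSet_Ici, Set.Ici_inter_Iic]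
  -- AE strong measurability of F
  have hmeas : AEStronglyMeasurable F (μx.prod μx) := by
    refine AEStronglyMeasurable.indicator ?_ hGmeas
    exact (hk.aestronglyMeasurable.restrict).comp_snd
  -- integrability of F
  have hF : Integrable F (μx.prod μx) := by
    rw [integrable_prod_iff' hmeas]
    constructor
    · refine Filter.Eventually.of_forall fun t => ?_
      rw [hFsec t, integrable_indicator_iff measurableSet_Ici]
      refine integrableOn_const (lt_top_iff_ne_top.1 ?_)
      show μx (Ici t) < ⊤
      rw [hμxIci t, Real.volume_Icc]
      exact ENNReal.ofReal_lt_top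
    · have hmarg : ∀ t : ℝ, (∫ v, ‖F (v, t)‖ ∂μx) = (volume (Icc t x)).toReal * ‖k t‖ := by
        intro t
        have h1 : (fun v => ‖F (v, t)‖) = (Ici t).indicator (fun _ => ‖k t‖) := by
          funext v; by_cases h : t ≤ v <;> simp [hFdef, Set.indicator_apply, h]
        rw [h1, integral_indicator measurableSet_Ici, setIntegral_const, measureReal_def, hμxIci t, smul_eq_mul]
      have hb : Integrable (fun t : ℝ => ‖((x:ℂ) - (t:ℂ)) * k t‖) μx := by
        have h2 : (fun t : ℝ => ((x:ℂ) - (t:ℂ)) * k t)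
            = fun t : ℝ => (x:ℂ) * k t - (t:ℂ) * k t := by funext t; ring
        have h3 : Integrable (fun t : ℝ => ((x:ℂ) - (t:ℂ)) * k t) := by
          rw [h2]; exact (hk.const_mul _).sub htk
        exact h3.norm.restrict
      refine hb.congr ((ae_restrict_iff' measurableSet_Iic).2
        (Filter.Eventually.of_forall fun t ht => ?_))
      show ‖((x:ℂ) - (t:ℂ)) * k t‖ = ∫ v, ‖F (v, t)‖ ∂μx
      rw [hmarg t, Real.volume_Icc, ENNReal.toReal_ofReal (by linarith [mem_Iic.1 ht] : (0:ℝ) ≤ x - t)]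
      have : ((x:ℂ) - (t:ℂ)) = ((x - t : ℝ) : ℂ) := by push_cast; ring
      rw [norm_mul, this, Complex.norm_real, Real.norm_eq_abs,
        abs_of_nonneg (by linarith [mem_Iic.1 ht] : (0:ℝ) ≤ x - t)]
  -- evaluate the two iterated integrals
  have hKeval : ∀ v ∈ Iic x, (∫ t, F (v, t) ∂μx) = K v := by
    intro v hv
    have h1 : (fun t => F (v, t)) = (Iic v).indicator k := by
      funext t; by_cases h : t ≤ v <;> simp [hFdef, Set.indicator_apply, h]
    rw [h1, integral_indicator measurableSet_Iic, hμx,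
      Measure.restrict_restrict measurableSet_Iic, Set.Iic_inter_Iic,
      min_eq_left (mem_Iic.1 hv), ← hK v]
  have hLeval : (∫ v, ∫ t, F (v, t) ∂μx ∂μx) = ∫ v in Iic x, K v :=
    setIntegral_congr_fun measurableSet_Iic fun v hv => hKeval v hv
  have hReval : (∫ t, ∫ v, F (v, t) ∂μx ∂μx) = ∫ t in Iic x, ((x:ℂ) - (t:ℂ)) * k t := by
    refine setIntegral_congr_fun measurableSet_Iic fun t ht => ?_
    rw [hFsec t, integral_indicator measurableSet_Ici, hμx,
      Measure.restrict_restrict measurableSet_Ici, Set.Ici_inter_Iic, setIntegral_const,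
      measureReal_def, Real.volume_Icc, ENNReal.toReal_ofReal (by linarith [mem_Iic.1 ht] : (0:ℝ) ≤ x - t)]
    rw [Complex.real_smul]
    push_cast
    ring
  have hswap : (∫ v, ∫ t, F (v, t) ∂μx ∂μx) = ∫ t, ∫ v, F (v, t) ∂μx ∂μx :=
    integral_integral_swap (f := fun v t => F (v, t)) hF
  have key : (∫ t in Iic x, ((x:ℂ) - (t:ℂ)) * k t) = ∫ v in Iic x, K v := by
    rw [← hReval, ← hswap, hLeval]
  -- integrabilities on Iic x
  have htk' : IntegrableOn (fun t : ℝ => (t:ℂ) * k t) (Iic x) := htk.integrableOn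
  have hxk' : IntegrableOn (fun t : ℝ => ((x:ℂ) - (t:ℂ)) * k t) (Iic x) := by
    have h2 : (fun t : ℝ => ((x:ℂ) - (t:ℂ)) * k t)
        = fun t : ℝ => (x:ℂ) * k t - (t:ℂ) * k t := by funext t; ring
    rw [h2]; exact ((hk.const_mul _).sub htk).integrableOn
  have hKon : IntegrableOn K (Iic x) := by
    have h1 : Integrable (fun v => ∫ t, F (v, t) ∂μx) μx := hF.integral_prod_left
    exact h1.congr ((ae_restrict_iff' measurableSet_Iic).2
      (Filter.Eventually.of_forall fun v hv => hKeval v hv))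
  calc (x:ℂ) * K x = (x:ℂ) * ∫ t in Iic x, k t := by rw [hK x]
    _ = ∫ t in Iic x, (x:ℂ) * k t := (integral_const_mul _ _).symm
    _ = ∫ t in Iic x, ((t:ℂ) * k t + ((x:ℂ) - (t:ℂ)) * k t) := by
        congr 1; funext t; ring
    _ = (∫ t in Iic x, (t:ℂ) * k t) + ∫ t in Iic x, ((x:ℂ) - (t:ℂ)) * k t :=
        integral_add htk' hxk'
    _ = (∫ t in Iic x, (t:ℂ) * k t) + ∫ v in Iic x, K v := by rw [key]
    _ = ∫ v in Iic x, (K v + (v:ℂ) * k v) := by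
        rw [add_comm, ← integral_add hKon htk']
end Stmt17Aux

set_option maxHeartbeats 2000000 in
theorem stmt17 (φ₁ φ₂ : ℝ → ℂ) (h₁ : Integrable φ₁) (h₂ : Integrable φ₂)
    (g₁ g₂ : ℝ → ℂ)
    (hg₁ : ∀ x : ℝ, g₁ x = ∫ t in Set.Iic x, φ₁ t)
    (hg₂ : ∀ x : ℝ, g₂ x = ∫ t in Set.Iic x, φ₂ t)
    (hxg₁ : Integrable (fun x : ℝ => (x:ℂ) * g₁ x))
    (hxg₂ : Integrable (fun x : ℝ => (x:ℂ) * g₂ x))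
    (ht₁ : Integrable (fun t : ℝ => (t:ℂ)^2 * φ₁ t))
    (ht₂ : Integrable (fun t : ℝ => (t:ℂ)^2 * φ₂ t)) :
    (∀ x : ℝ, (∫ t : ℝ, g₁ (x - t) * g₂ t)
        = ∫ w in Set.Iic x, ∫ t : ℝ, g₁ (w - t) * φ₂ t) ∧
    eVariationOn (fun x : ℝ => (x:ℂ) * ∫ t : ℝ, g₁ (x - t) * g₂ t) Set.univ
      ≤ ENNReal.ofReal ((∫ x : ℝ, ‖(x:ℂ) * g₁ x‖) * (∫ t : ℝ, ‖φ₂ t‖)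
          + (∫ x : ℝ, ‖g₁ x‖) * (∫ t : ℝ, ‖(t:ℂ) * φ₂ t‖)
          + (∫ x : ℝ, ‖g₁ x‖) * (∫ x : ℝ, ‖g₂ x‖)) ∧
    eVariationOn (fun x : ℝ => (x:ℂ)^2 * ∫ t : ℝ, g₁ (x - t) * φ₂ t) Set.univ
      ≤ ENNReal.ofReal (2*(∫ x : ℝ, ‖(x:ℂ) * g₁ x‖) * (∫ t : ℝ, ‖φ₂ t‖)
          + 2*(∫ x : ℝ, ‖g₁ x‖) * (∫ t : ℝ, ‖(t:ℂ) * φ₂ t‖)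
          + (∫ t : ℝ, ‖(t:ℂ)^2 * φ₁ t‖) * (∫ t : ℝ, ‖φ₂ t‖)
          + 2*(∫ t : ℝ, ‖(t:ℂ) * φ₁ t‖) * (∫ t : ℝ, ‖(t:ℂ) * φ₂ t‖)
          + (∫ t : ℝ, ‖φ₁ t‖) * (∫ t : ℝ, ‖(t:ℂ)^2 * φ₂ t‖)) := by
  -- derived integrability facts
  have hnφ₁ : (0:ℝ) ≤ ∫ t : ℝ, ‖φ₁ t‖ := integral_nonneg fun t => norm_nonneg _
  have hnφ₂ : (0:ℝ) ≤ ∫ t : ℝ, ‖φ₂ t‖ := integral_nonneg fun t => norm_nonneg _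
  have hg₁m : AEStronglyMeasurable g₁ volume := aemeas_of_xmul hxg₁
  have hg₂m : AEStronglyMeasurable g₂ volume := aemeas_of_xmul hxg₂
  have hg₁b : ∀ x : ℝ, ‖g₁ x‖ ≤ ∫ t : ℝ, ‖φ₁ t‖ := fun x => by
    rw [hg₁ x]
    exact (norm_integral_le_integral_norm _).trans
      (setIntegral_le_integral h₁.norm (Filter.Eventually.of_forall fun t => norm_nonneg _))
  have hg₂b : ∀ x : ℝ, ‖g₂ x‖ ≤ ∫ t : ℝ, ‖φ₂ t‖ := fun x => by
    rw [hg₂ x]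
    exact (norm_integral_le_integral_norm _).trans
      (setIntegral_le_integral h₂.norm (Filter.Eventually.of_forall fun t => norm_nonneg _))
  have hg₁int : Integrable g₁ := int_of_xint hg₁m hnφ₁ hg₁b hxg₁
  have hg₂int : Integrable g₂ := int_of_xint hg₂m hnφ₂ hg₂b hxg₂
  have htφ₁ : Integrable (fun t : ℝ => (t:ℂ) * φ₁ t) := int_mul_of_sq h₁ ht₁
  have htφ₂ : Integrable (fun t : ℝ => (t:ℂ) * φ₂ t) := int_mul_of_sq h₂ ht₂
  -- part 1
  have part1 : ∀ x : ℝ, (∫ t : ℝ, g₁ (x - t) * g₂ t)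
      = ∫ w in Set.Iic x, ∫ t : ℝ, g₁ (w - t) * φ₂ t := fun x => keyB hg₁int h₂ hg₂ x
  -- kk = g₁ ⋆ φ₂
  have hkkint : Integrable (fun v : ℝ => ∫ t : ℝ, g₁ (v - t) * φ₂ t) :=
    (convI hg₁int h₂).integral_prod_left
  have hW₁ : Integrable (fun p : ℝ × ℝ => (((p.1 - p.2 : ℝ) : ℂ) * g₁ (p.1 - p.2)) * φ₂ p.2)
      ((volume : Measure ℝ).prod volume) := convI hxg₁ h₂
  have hW₂ : Integrable (fun p : ℝ × ℝ => g₁ (p.1 - p.2) * ((p.2 : ℂ) * φ₂ p.2))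
      ((volume : Measure ℝ).prod volume) := convI hg₁int htφ₂
  have hWeq : (fun p : ℝ × ℝ => (p.1 : ℂ) * (g₁ (p.1 - p.2) * φ₂ p.2))
      = fun p : ℝ × ℝ => (((p.1 - p.2 : ℝ) : ℂ) * g₁ (p.1 - p.2)) * φ₂ p.2
          + g₁ (p.1 - p.2) * ((p.2 : ℂ) * φ₂ p.2) := by
    funext p; push_cast; ring
  have hW : Integrable (fun p : ℝ × ℝ => (p.1 : ℂ) * (g₁ (p.1 - p.2) * φ₂ p.2))
      ((volume : Measure ℝ).prod volume) := by
    rw [hWeq]; exact hW₁.add hW₂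
  have hvkk : Integrable (fun v : ℝ => (v : ℂ) * ∫ t : ℝ, g₁ (v - t) * φ₂ t) :=
    hW.integral_prod_left.congr
      (Filter.Eventually.of_forall fun v =>
        integral_const_mul ((v:ℂ)) (fun t => g₁ (v - t) * φ₂ t))
  have hnp₁ : (∫ p : ℝ × ℝ, ‖(((p.1 - p.2 : ℝ) : ℂ) * g₁ (p.1 - p.2)) * φ₂ p.2‖
        ∂((volume : Measure ℝ).prod volume))
      = (∫ x : ℝ, ‖(x:ℂ) * g₁ x‖) * (∫ t : ℝ, ‖φ₂ t‖) := by
    have h := normprodConv hxg₁ h₂; exact h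
  have hnp₂ : (∫ p : ℝ × ℝ, ‖g₁ (p.1 - p.2) * ((p.2 : ℂ) * φ₂ p.2)‖
        ∂((volume : Measure ℝ).prod volume))
      = (∫ x : ℝ, ‖g₁ x‖) * (∫ t : ℝ, ‖(t:ℂ) * φ₂ t‖) := by
    have h := normprodConv hg₁int htφ₂; exact h
  have hbd1 : (∫ v : ℝ, ‖(v : ℂ) * ∫ t : ℝ, g₁ (v - t) * φ₂ t‖)
      ≤ (∫ x : ℝ, ‖(x:ℂ) * g₁ x‖) * (∫ t : ℝ, ‖φ₂ t‖)
        + (∫ x : ℝ, ‖g₁ x‖) * (∫ t : ℝ, ‖(t:ℂ) * φ₂ t‖) := by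
    calc (∫ v : ℝ, ‖(v : ℂ) * ∫ t : ℝ, g₁ (v - t) * φ₂ t‖)
        = ∫ v : ℝ, ‖∫ t : ℝ, (v : ℂ) * (g₁ (v - t) * φ₂ t)‖ := by
          congr 1; funext v
          exact congrArg Norm.norm
            (integral_const_mul ((v:ℂ)) (fun t => g₁ (v - t) * φ₂ t)).symm
      _ ≤ ∫ p : ℝ × ℝ, ‖(p.1 : ℂ) * (g₁ (p.1 - p.2) * φ₂ p.2)‖
            ∂((volume : Measure ℝ).prod volume) := by
            have h := normIntegralConv hW; exact h
      _ = ∫ p : ℝ × ℝ, ‖(((p.1 - p.2 : ℝ) : ℂ) * g₁ (p.1 - p.2)) * φ₂ p.2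
            + g₁ (p.1 - p.2) * ((p.2 : ℂ) * φ₂ p.2)‖
            ∂((volume : Measure ℝ).prod volume) := by
          congr 1; funext p; congr 1; push_cast; ring
      _ ≤ (∫ p : ℝ × ℝ, ‖(((p.1 - p.2 : ℝ) : ℂ) * g₁ (p.1 - p.2)) * φ₂ p.2‖
            ∂((volume : Measure ℝ).prod volume))
          + ∫ p : ℝ × ℝ, ‖g₁ (p.1 - p.2) * ((p.2 : ℂ) * φ₂ p.2)‖
            ∂((volume : Measure ℝ).prod volume) := by
          rw [← integral_add hW₁.norm hW₂.norm]
          exact integral_mono (hW₁.add hW₂).norm (hW₁.norm.add hW₂.norm)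
            (fun p => norm_add_le _ _)
      _ = _ := by rw [hnp₁, hnp₂]
  refine ⟨part1, ?_, ?_⟩
  · -- part (i)
    have hKint : Integrable (fun v : ℝ => ∫ t : ℝ, g₁ (v - t) * g₂ t) :=
      (convI hg₁int hg₂int).integral_prod_left
    have hbdK : (∫ v : ℝ, ‖∫ t : ℝ, g₁ (v - t) * g₂ t‖)
        ≤ (∫ x : ℝ, ‖g₁ x‖) * (∫ x : ℝ, ‖g₂ x‖) :=
      by
        have ha := normIntegralConv (convI hg₁int hg₂int)
        have hb := normprodConv hg₁int hg₂int
        exact le_of_le_of_eq ha hb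
    have hH₁ : ∀ x : ℝ, (x:ℂ) * (∫ t : ℝ, g₁ (x - t) * g₂ t)
        = ∫ v in Set.Iic x,
            ((∫ t : ℝ, g₁ (v - t) * g₂ t) + (v:ℂ) * ∫ t : ℝ, g₁ (v - t) * φ₂ t) :=
      fun x => keyA hkkint hvkk part1 x
    have hH₁int : Integrable (fun v : ℝ =>
        (∫ t : ℝ, g₁ (v - t) * g₂ t) + (v:ℂ) * ∫ t : ℝ, g₁ (v - t) * φ₂ t) :=
      hKint.add hvkk
    have hH₁bd : (∫ v : ℝ,
          ‖(∫ t : ℝ, g₁ (v - t) * g₂ t) + (v:ℂ) * ∫ t : ℝ, g₁ (v - t) * φ₂ t‖)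
        ≤ (∫ x : ℝ, ‖(x:ℂ) * g₁ x‖) * (∫ t : ℝ, ‖φ₂ t‖)
          + (∫ x : ℝ, ‖g₁ x‖) * (∫ t : ℝ, ‖(t:ℂ) * φ₂ t‖)
          + (∫ x : ℝ, ‖g₁ x‖) * (∫ x : ℝ, ‖g₂ x‖) := by
      have h1 : (∫ v : ℝ,
            ‖(∫ t : ℝ, g₁ (v - t) * g₂ t) + (v:ℂ) * ∫ t : ℝ, g₁ (v - t) * φ₂ t‖)
          ≤ (∫ v : ℝ, ‖∫ t : ℝ, g₁ (v - t) * g₂ t‖)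
            + ∫ v : ℝ, ‖(v:ℂ) * ∫ t : ℝ, g₁ (v - t) * φ₂ t‖ := by
        rw [← integral_add hKint.norm hvkk.norm]
        exact integral_mono hH₁int.norm (hKint.norm.add hvkk.norm)
          (fun v => norm_add_le _ _)
      linarith
    exact le_trans (evar_le hH₁int hH₁) (ENNReal.ofReal_le_ofReal hH₁bd)
  · -- part (ii)
    have hmint : Integrable (fun v : ℝ => ∫ t : ℝ, φ₂ (v - t) * φ₁ t) :=
      (convI h₂ h₁).integral_prod_left
    have hkk2 : ∀ x : ℝ, (∫ t : ℝ, g₁ (x - t) * φ₂ t)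
        = ∫ v in Set.Iic x, ∫ t : ℝ, φ₂ (v - t) * φ₁ t := by
      intro x
      have hc : (∫ t : ℝ, g₁ (x - (x - t)) * φ₂ (x - t)) = ∫ t : ℝ, g₁ (x - t) * φ₂ t :=
        integral_sub_left_eq_self (fun t : ℝ => g₁ (x - t) * φ₂ t) volume x
      have hc2 : (∫ t : ℝ, g₁ (x - t) * φ₂ t) = ∫ t : ℝ, φ₂ (x - t) * g₁ t := by
        rw [← hc]; congr 1; funext t; rw [sub_sub_cancel]; ring
      rw [hc2]
      exact keyB h₂ h₁ hg₁ x
    -- v * m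
    have hV₁ : Integrable (fun p : ℝ × ℝ => (((p.1 - p.2 : ℝ) : ℂ) * φ₂ (p.1 - p.2)) * φ₁ p.2)
        ((volume : Measure ℝ).prod volume) := convI htφ₂ h₁
    have hV₂ : Integrable (fun p : ℝ × ℝ => φ₂ (p.1 - p.2) * ((p.2 : ℂ) * φ₁ p.2))
        ((volume : Measure ℝ).prod volume) := convI h₂ htφ₁
    have hVeq : (fun p : ℝ × ℝ => (p.1 : ℂ) * (φ₂ (p.1 - p.2) * φ₁ p.2))
        = fun p : ℝ × ℝ => (((p.1 - p.2 : ℝ) : ℂ) * φ₂ (p.1 - p.2)) * φ₁ p.2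
            + φ₂ (p.1 - p.2) * ((p.2 : ℂ) * φ₁ p.2) := by
      funext p; push_cast; ring
    have hV : Integrable (fun p : ℝ × ℝ => (p.1 : ℂ) * (φ₂ (p.1 - p.2) * φ₁ p.2))
        ((volume : Measure ℝ).prod volume) := by
      rw [hVeq]; exact hV₁.add hV₂
    have hvm : Integrable (fun v : ℝ => (v : ℂ) * ∫ t : ℝ, φ₂ (v - t) * φ₁ t) :=
      hV.integral_prod_left.congr
        (Filter.Eventually.of_forall fun v =>
          integral_const_mul ((v:ℂ)) (fun t => φ₂ (v - t) * φ₁ t))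
    have hxkk : ∀ x : ℝ, (x:ℂ) * (∫ t : ℝ, g₁ (x - t) * φ₂ t)
        = ∫ v in Set.Iic x,
            ((∫ t : ℝ, g₁ (v - t) * φ₂ t) + (v:ℂ) * ∫ t : ℝ, φ₂ (v - t) * φ₁ t) :=
      fun x => keyA hmint hvm hkk2 x
    -- v^2 * m
    have hU₁ : Integrable
        (fun p : ℝ × ℝ => (((p.1 - p.2 : ℝ) : ℂ)^2 * φ₂ (p.1 - p.2)) * φ₁ p.2)
        ((volume : Measure ℝ).prod volume) := convI ht₂ h₁
    have hU₃ : Integrable (fun p : ℝ × ℝ => φ₂ (p.1 - p.2) * ((p.2 : ℂ)^2 * φ₁ p.2))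
        ((volume : Measure ℝ).prod volume) := convI h₂ ht₁
    have hU₂ : Integrable
        (fun p : ℝ × ℝ => (((p.1 - p.2 : ℝ) : ℂ) * φ₂ (p.1 - p.2)) * ((p.2 : ℂ) * φ₁ p.2))
        ((volume : Measure ℝ).prod volume) := convI htφ₂ htφ₁
    have hUeq : (fun p : ℝ × ℝ => (p.1 : ℂ)^2 * (φ₂ (p.1 - p.2) * φ₁ p.2))
        = fun p : ℝ × ℝ => (((p.1 - p.2 : ℝ) : ℂ)^2 * φ₂ (p.1 - p.2)) * φ₁ p.2
            + ((((p.1 - p.2 : ℝ) : ℂ) * φ₂ (p.1 - p.2)) * ((p.2 : ℂ) * φ₁ p.2)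
              + (((p.1 - p.2 : ℝ) : ℂ) * φ₂ (p.1 - p.2)) * ((p.2 : ℂ) * φ₁ p.2))
            + φ₂ (p.1 - p.2) * ((p.2 : ℂ)^2 * φ₁ p.2) := by
      funext p; push_cast; ring
    have hU : Integrable (fun p : ℝ × ℝ => (p.1 : ℂ)^2 * (φ₂ (p.1 - p.2) * φ₁ p.2))
        ((volume : Measure ℝ).prod volume) := by
      rw [hUeq]; exact (hU₁.add (hU₂.add hU₂)).add hU₃
    have hv2m : Integrable (fun v : ℝ => (v : ℂ)^2 * ∫ t : ℝ, φ₂ (v - t) * φ₁ t) :=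
      hU.integral_prod_left.congr
        (Filter.Eventually.of_forall fun v =>
          integral_const_mul ((v:ℂ)^2) (fun t => φ₂ (v - t) * φ₁ t))
    have hk₂int : Integrable (fun v : ℝ =>
        (∫ t : ℝ, g₁ (v - t) * φ₂ t) + (v:ℂ) * ∫ t : ℝ, φ₂ (v - t) * φ₁ t) :=
      hkkint.add hvm
    have hvk₂ : Integrable (fun v : ℝ => (v:ℂ) *
        ((∫ t : ℝ, g₁ (v - t) * φ₂ t) + (v:ℂ) * ∫ t : ℝ, φ₂ (v - t) * φ₁ t)) := by
      have he : (fun v : ℝ => (v:ℂ) *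
            ((∫ t : ℝ, g₁ (v - t) * φ₂ t) + (v:ℂ) * ∫ t : ℝ, φ₂ (v - t) * φ₁ t))
          = fun v : ℝ => (v:ℂ) * (∫ t : ℝ, g₁ (v - t) * φ₂ t)
              + (v:ℂ)^2 * ∫ t : ℝ, φ₂ (v - t) * φ₁ t := by
        funext v; ring
      rw [he]; exact hvkk.add hv2m
    have hH₂ : ∀ x : ℝ, (x:ℂ) * ((x:ℂ) * ∫ t : ℝ, g₁ (x - t) * φ₂ t)
        = ∫ v in Set.Iic x, (((v:ℂ) * ∫ t : ℝ, g₁ (v - t) * φ₂ t)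
            + (v:ℂ) * ((∫ t : ℝ, g₁ (v - t) * φ₂ t)
              + (v:ℂ) * ∫ t : ℝ, φ₂ (v - t) * φ₁ t)) :=
      fun x => keyA hk₂int hvk₂ hxkk x
    have hF₂ : ∀ x : ℝ, (x:ℂ)^2 * (∫ t : ℝ, g₁ (x - t) * φ₂ t)
        = ∫ v in Set.Iic x, (((v:ℂ) * ∫ t : ℝ, g₁ (v - t) * φ₂ t)
            + (v:ℂ) * ((∫ t : ℝ, g₁ (v - t) * φ₂ t)
              + (v:ℂ) * ∫ t : ℝ, φ₂ (v - t) * φ₁ t)) := by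
      intro x
      rw [show (x:ℂ)^2 * (∫ t : ℝ, g₁ (x - t) * φ₂ t)
          = (x:ℂ) * ((x:ℂ) * ∫ t : ℝ, g₁ (x - t) * φ₂ t) from by ring]
      exact hH₂ x
    have hH₂int : Integrable (fun v : ℝ => ((v:ℂ) * ∫ t : ℝ, g₁ (v - t) * φ₂ t)
        + (v:ℂ) * ((∫ t : ℝ, g₁ (v - t) * φ₂ t)
          + (v:ℂ) * ∫ t : ℝ, φ₂ (v - t) * φ₁ t)) := hvkk.add hvk₂
    -- bound on ∫ ‖v² m v‖
    have hnq₁ : (∫ p : ℝ × ℝ, ‖(((p.1 - p.2 : ℝ) : ℂ)^2 * φ₂ (p.1 - p.2)) * φ₁ p.2‖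
          ∂((volume : Measure ℝ).prod volume))
        = (∫ t : ℝ, ‖(t:ℂ)^2 * φ₂ t‖) * (∫ t : ℝ, ‖φ₁ t‖) := by
      have h := normprodConv ht₂ h₁; exact h
    have hnq₂ : (∫ p : ℝ × ℝ,
          ‖(((p.1 - p.2 : ℝ) : ℂ) * φ₂ (p.1 - p.2)) * ((p.2 : ℂ) * φ₁ p.2)‖
          ∂((volume : Measure ℝ).prod volume))
        = (∫ t : ℝ, ‖(t:ℂ) * φ₂ t‖) * (∫ t : ℝ, ‖(t:ℂ) * φ₁ t‖) := by
      have h := normprodConv htφ₂ htφ₁; exact h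
    have hnq₃ : (∫ p : ℝ × ℝ, ‖φ₂ (p.1 - p.2) * ((p.2 : ℂ)^2 * φ₁ p.2)‖
          ∂((volume : Measure ℝ).prod volume))
        = (∫ t : ℝ, ‖φ₂ t‖) * (∫ t : ℝ, ‖(t:ℂ)^2 * φ₁ t‖) := by
      have h := normprodConv h₂ ht₁; exact h
    have hbdm : (∫ v : ℝ, ‖(v:ℂ)^2 * ∫ t : ℝ, φ₂ (v - t) * φ₁ t‖)
        ≤ (∫ t : ℝ, ‖(t:ℂ)^2 * φ₁ t‖) * (∫ t : ℝ, ‖φ₂ t‖)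
          + 2*(∫ t : ℝ, ‖(t:ℂ) * φ₁ t‖) * (∫ t : ℝ, ‖(t:ℂ) * φ₂ t‖)
          + (∫ t : ℝ, ‖φ₁ t‖) * (∫ t : ℝ, ‖(t:ℂ)^2 * φ₂ t‖) := by
      calc (∫ v : ℝ, ‖(v:ℂ)^2 * ∫ t : ℝ, φ₂ (v - t) * φ₁ t‖)
          = ∫ v : ℝ, ‖∫ t : ℝ, (v:ℂ)^2 * (φ₂ (v - t) * φ₁ t)‖ := by
            congr 1; funext v
            exact congrArg Norm.norm
              (integral_const_mul ((v:ℂ)^2) (fun t => φ₂ (v - t) * φ₁ t)).symm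
        _ ≤ ∫ p : ℝ × ℝ, ‖(p.1 : ℂ)^2 * (φ₂ (p.1 - p.2) * φ₁ p.2)‖
              ∂((volume : Measure ℝ).prod volume) := by
              have h := normIntegralConv hU; exact h
        _ = ∫ p : ℝ × ℝ, ‖(((p.1 - p.2 : ℝ) : ℂ)^2 * φ₂ (p.1 - p.2)) * φ₁ p.2
              + ((((p.1 - p.2 : ℝ) : ℂ) * φ₂ (p.1 - p.2)) * ((p.2 : ℂ) * φ₁ p.2)
                + (((p.1 - p.2 : ℝ) : ℂ) * φ₂ (p.1 - p.2)) * ((p.2 : ℂ) * φ₁ p.2))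
              + φ₂ (p.1 - p.2) * ((p.2 : ℂ)^2 * φ₁ p.2)‖
              ∂((volume : Measure ℝ).prod volume) := by
            congr 1; funext p; congr 1; push_cast; ring
        _ ≤ (∫ p : ℝ × ℝ, ‖(((p.1 - p.2 : ℝ) : ℂ)^2 * φ₂ (p.1 - p.2)) * φ₁ p.2‖
              ∂((volume : Measure ℝ).prod volume))
            + ((∫ p : ℝ × ℝ,
                ‖(((p.1 - p.2 : ℝ) : ℂ) * φ₂ (p.1 - p.2)) * ((p.2 : ℂ) * φ₁ p.2)‖
                ∂((volume : Measure ℝ).prod volume))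
              + (∫ p : ℝ × ℝ,
                ‖(((p.1 - p.2 : ℝ) : ℂ) * φ₂ (p.1 - p.2)) * ((p.2 : ℂ) * φ₁ p.2)‖
                ∂((volume : Measure ℝ).prod volume)))
            + (∫ p : ℝ × ℝ, ‖φ₂ (p.1 - p.2) * ((p.2 : ℂ)^2 * φ₁ p.2)‖
              ∂((volume : Measure ℝ).prod volume)) := by
            have hmono : (∫ p : ℝ × ℝ, ‖(((p.1 - p.2 : ℝ) : ℂ)^2 * φ₂ (p.1 - p.2)) * φ₁ p.2
                  + ((((p.1 - p.2 : ℝ) : ℂ) * φ₂ (p.1 - p.2)) * ((p.2 : ℂ) * φ₁ p.2)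
                    + (((p.1 - p.2 : ℝ) : ℂ) * φ₂ (p.1 - p.2)) * ((p.2 : ℂ) * φ₁ p.2))
                  + φ₂ (p.1 - p.2) * ((p.2 : ℂ)^2 * φ₁ p.2)‖
                  ∂((volume : Measure ℝ).prod volume))
                ≤ ∫ p : ℝ × ℝ, (‖(((p.1 - p.2 : ℝ) : ℂ)^2 * φ₂ (p.1 - p.2)) * φ₁ p.2‖
                  + (‖(((p.1 - p.2 : ℝ) : ℂ) * φ₂ (p.1 - p.2)) * ((p.2 : ℂ) * φ₁ p.2)‖
                    + ‖(((p.1 - p.2 : ℝ) : ℂ) * φ₂ (p.1 - p.2)) * ((p.2 : ℂ) * φ₁ p.2)‖)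
                  + ‖φ₂ (p.1 - p.2) * ((p.2 : ℂ)^2 * φ₁ p.2)‖)
                  ∂((volume : Measure ℝ).prod volume) := by
              refine integral_mono ((hU₁.add (hU₂.add hU₂)).add hU₃).norm
                ((hU₁.norm.add (hU₂.norm.add hU₂.norm)).add hU₃.norm) (fun p => ?_)
              refine le_trans (norm_add_le _ _) (add_le_add_left ?_ _)
              refine le_trans (norm_add_le _ _) (add_le_add_right ?_ _)
              exact norm_add_le _ _
            refine hmono.trans (le_of_eq ?_)
            have iA : Integrable
                (fun p : ℝ × ℝ => ‖(((p.1 - p.2 : ℝ) : ℂ)^2 * φ₂ (p.1 - p.2)) * φ₁ p.2‖)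
                ((volume : Measure ℝ).prod volume) := hU₁.norm
            have iB : Integrable
                (fun p : ℝ × ℝ => ‖(((p.1 - p.2 : ℝ) : ℂ) * φ₂ (p.1 - p.2)) * ((p.2 : ℂ) * φ₁ p.2)‖)
                ((volume : Measure ℝ).prod volume) := hU₂.norm
            have iC : Integrable
                (fun p : ℝ × ℝ => ‖φ₂ (p.1 - p.2) * ((p.2 : ℂ)^2 * φ₁ p.2)‖)
                ((volume : Measure ℝ).prod volume) := hU₃.norm
            have iBB : Integrable
                (fun p : ℝ × ℝ => ‖(((p.1 - p.2 : ℝ) : ℂ) * φ₂ (p.1 - p.2)) * ((p.2 : ℂ) * φ₁ p.2)‖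
                  + ‖(((p.1 - p.2 : ℝ) : ℂ) * φ₂ (p.1 - p.2)) * ((p.2 : ℂ) * φ₁ p.2)‖)
                ((volume : Measure ℝ).prod volume) := iB.add iB
            have iABB : Integrable
                (fun p : ℝ × ℝ => ‖(((p.1 - p.2 : ℝ) : ℂ)^2 * φ₂ (p.1 - p.2)) * φ₁ p.2‖
                  + (‖(((p.1 - p.2 : ℝ) : ℂ) * φ₂ (p.1 - p.2)) * ((p.2 : ℂ) * φ₁ p.2)‖
                    + ‖(((p.1 - p.2 : ℝ) : ℂ) * φ₂ (p.1 - p.2)) * ((p.2 : ℂ) * φ₁ p.2)‖))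
                ((volume : Measure ℝ).prod volume) := iA.add iBB
            rw [integral_add iABB iC, integral_add iA iBB, integral_add iB iB]
        _ = _ := by rw [hnq₁, hnq₂, hnq₃]; ring
    have hbdH₂ : (∫ v : ℝ, ‖((v:ℂ) * ∫ t : ℝ, g₁ (v - t) * φ₂ t)
          + (v:ℂ) * ((∫ t : ℝ, g₁ (v - t) * φ₂ t)
            + (v:ℂ) * ∫ t : ℝ, φ₂ (v - t) * φ₁ t)‖)
        ≤ 2*(∫ x : ℝ, ‖(x:ℂ) * g₁ x‖) * (∫ t : ℝ, ‖φ₂ t‖)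
          + 2*(∫ x : ℝ, ‖g₁ x‖) * (∫ t : ℝ, ‖(t:ℂ) * φ₂ t‖)
          + (∫ t : ℝ, ‖(t:ℂ)^2 * φ₁ t‖) * (∫ t : ℝ, ‖φ₂ t‖)
          + 2*(∫ t : ℝ, ‖(t:ℂ) * φ₁ t‖) * (∫ t : ℝ, ‖(t:ℂ) * φ₂ t‖)
          + (∫ t : ℝ, ‖φ₁ t‖) * (∫ t : ℝ, ‖(t:ℂ)^2 * φ₂ t‖) := by
      have h1 : (∫ v : ℝ, ‖((v:ℂ) * ∫ t : ℝ, g₁ (v - t) * φ₂ t)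
            + (v:ℂ) * ((∫ t : ℝ, g₁ (v - t) * φ₂ t)
              + (v:ℂ) * ∫ t : ℝ, φ₂ (v - t) * φ₁ t)‖)
          ≤ (∫ v : ℝ, ‖(v:ℂ) * ∫ t : ℝ, g₁ (v - t) * φ₂ t‖)
            + ∫ v : ℝ, ‖(v:ℂ) * ((∫ t : ℝ, g₁ (v - t) * φ₂ t)
              + (v:ℂ) * ∫ t : ℝ, φ₂ (v - t) * φ₁ t)‖ := by
        rw [← integral_add hvkk.norm hvk₂.norm]
        exact integral_mono hH₂int.norm (hvkk.norm.add hvk₂.norm)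
          (fun v => norm_add_le _ _)
      have h2 : (∫ v : ℝ, ‖(v:ℂ) * ((∫ t : ℝ, g₁ (v - t) * φ₂ t)
            + (v:ℂ) * ∫ t : ℝ, φ₂ (v - t) * φ₁ t)‖)
          ≤ (∫ v : ℝ, ‖(v:ℂ) * ∫ t : ℝ, g₁ (v - t) * φ₂ t‖)
            + ∫ v : ℝ, ‖(v:ℂ)^2 * ∫ t : ℝ, φ₂ (v - t) * φ₁ t‖ := by
        have he : (fun v : ℝ => ‖(v:ℂ) * ((∫ t : ℝ, g₁ (v - t) * φ₂ t)
              + (v:ℂ) * ∫ t : ℝ, φ₂ (v - t) * φ₁ t)‖)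
            = fun v : ℝ => ‖((v:ℂ) * ∫ t : ℝ, g₁ (v - t) * φ₂ t)
              + (v:ℂ)^2 * ∫ t : ℝ, φ₂ (v - t) * φ₁ t‖ := by
          funext v; congr 1; ring
        rw [he, ← integral_add hvkk.norm hv2m.norm]
        exact integral_mono (hvkk.add hv2m).norm (hvkk.norm.add hv2m.norm)
          (fun v => norm_add_le _ _)
      linarith
    exact le_trans (evar_le hH₂int hF₂) (ENNReal.ofReal_le_ofReal hbdH₂)
end
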